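/- arXiv:math/0506044 — 3 statements merged into one kernel-verified Lean document; each statement's English description precedes it below -/
import Mathlib

section
/- Let X be a locally compact Hausdorff space and let T be a set of continuous functions h : X → [-∞,∞) such that: (i) T satisfies the tail condition for (μ_α^{t_α}); (ii) limsup_α μ_α(K)^{t_α} ≤ liminf_α μ_α(G)^{t_α} for every compact K ⊂ X and every open G ⊂ X with K ⊂ G; (iii) there is a real m with Λ̄(h) > m for all h ∈ T. If moreover T ⊂ C_K(X), then Λ(h) exists for every h ∈ T and there is a real M such that Λ(h) = sup_{x ∈ {m ≤ h ≤ M}} (h(x) − l_1(x)) = sup_{x ∈ X} (h(x) − l_1(x)) for all h ∈ T. -/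
open Filter MeasureTheory Topology Set
open scoped ENNReal NNReal

noncomputable section

variable {X : Type*} [TopologicalSpace X] [MeasurableSpace X]
variable {A : Type*} [Preorder A]

/-- `(∫ e^{h/t_α} dμ_α)^{t_α}` as an extended nonnegative real. -/
noncomputable def expPow (μ : A → Measure X) (t : A → ℝ) (h : X → EReal) (a : A) : ℝ≥0∞ :=
  (∫⁻ x, EReal.exp ((((t a)⁻¹ : ℝ) : EReal) * h x) ∂(μ a)) ^ (t a)

/-- `Λ̄(h) = log limsup_α (∫ e^{h/t_α} dμ_α)^{t_α}`. -/
noncomputable def LambdaBar (μ : A → Measure X) (t : A → ℝ) (h : X → EReal) : EReal :=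
  ENNReal.log (Filter.limsup (expPow μ t h) Filter.atTop)

/-- `Λ̲(h) = log liminf_α (∫ e^{h/t_α} dμ_α)^{t_α}`. -/
noncomputable def LambdaUnder (μ : A → Measure X) (t : A → ℝ) (h : X → EReal) : EReal :=
  ENNReal.log (Filter.liminf (expPow μ t h) Filter.atTop)

/-- `Λ(h)` exists when `Λ̲(h) = Λ̄(h)`. -/
def LambdaExists (μ : A → Measure X) (t : A → ℝ) (h : X → EReal) : Prop :=
  LambdaUnder μ t h = LambdaBar μ t h

/-- `l₁(x) = −log inf { liminf_α μ_α(G)^{t_α} : G open, x ∈ G }`. -/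
noncomputable def lOne (μ : A → Measure X) (t : A → ℝ) (x : X) : EReal :=
  - ENNReal.log (⨅ (G : Set X) (_ : IsOpen G) (_ : x ∈ G),
      Filter.liminf (fun a => μ a G ^ (t a)) Filter.atTop)

/-- `l₀(x) = −log inf { limsup_α μ_α(G)^{t_α} : G open, x ∈ G }`. -/
noncomputable def lZero (μ : A → Measure X) (t : A → ℝ) (x : X) : EReal :=
  - ENNReal.log (⨅ (G : Set X) (_ : IsOpen G) (_ : x ∈ G),
      Filter.limsup (fun a => μ a G ^ (t a)) Filter.atTop)

/-- The uniform tail condition for a family `T`. -/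
def TailCondition (μ : A → Measure X) (t : A → ℝ) (T : Set (X → EReal)) : Prop :=
  ∀ ε : ℝ, 0 < ε → ∃ M : ℝ, ∀ h ∈ T,
    Filter.limsup (fun a =>
        (∫⁻ x in {x | (M : EReal) < h x}, EReal.exp ((((t a)⁻¹ : ℝ) : EReal) * h x) ∂(μ a))
          ^ (t a)) Filter.atTop
      < ENNReal.ofReal ε

/-- Vague large deviation principle with powers `t` and rate function `J`. -/
def VagueLDP (μ : A → Measure X) (t : A → ℝ) (J : X → ℝ≥0∞) : Prop :=
  LowerSemicontinuous J ∧
  (∀ K : Set X, IsCompact K →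
      Filter.limsup (fun a => μ a K ^ (t a)) Filter.atTop ≤ ⨆ x ∈ K, EReal.exp (-(J x : EReal))) ∧
  (∀ G : Set X, IsOpen G →
      (⨆ x ∈ G, EReal.exp (-(J x : EReal))) ≤ Filter.liminf (fun a => μ a G ^ (t a)) Filter.atTop)

/-- Narrow large deviation principle with powers `t` and rate function `J`. -/
def NarrowLDP (μ : A → Measure X) (t : A → ℝ) (J : X → ℝ≥0∞) : Prop :=
  LowerSemicontinuous J ∧
  (∀ F : Set X, IsClosed F →
      Filter.limsup (fun a => μ a F ^ (t a)) Filter.atTop ≤ ⨆ x ∈ F, EReal.exp (-(J x : EReal))) ∧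
  (∀ G : Set X, IsOpen G →
      (⨆ x ∈ G, EReal.exp (-(J x : EReal))) ≤ Filter.liminf (fun a => μ a G ^ (t a)) Filter.atTop)

/-- Exponential tightness of `(μ_α)` with respect to `(t_α)`. -/
def ExpTight (μ : A → Measure X) (t : A → ℝ) : Prop :=
  ∀ ε : ℝ, 0 < ε → ∃ K : Set X, IsCompact K ∧
    Filter.limsup (fun a => μ a Kᶜ ^ (t a)) Filter.atTop < ENNReal.ofReal ε

/-- The linear function `h_λ(x) = λ x`, as an `EReal`-valued function on `ℝ`. -/
noncomputable def hlin (l : ℝ) : ℝ → EReal := fun x => ((l * x : ℝ) : EReal)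

/-- Legendre-Fenchel transform of `L` restricted to `G` (extended by `+∞` off `G`):
`L|_G^*(x) = sup_{λ ∈ G} (λ x − L λ)`. -/
noncomputable def LegG (L : ℝ → ℝ) (G : Set ℝ) (x : ℝ) : EReal :=
  ⨆ l ∈ G, ((l * x - L l : ℝ) : EReal)

/-- Abstract Legendre-Fenchel transform `Λ|_S^*(x) = sup_{h ∈ S} (h(x) − Λ(h))`. -/
noncomputable def LamStar (μ : A → Measure X) (t : A → ℝ) (S : Set (X → EReal)) (x : X) : EReal :=
  ⨆ h ∈ S, (h x - LambdaBar μ t h)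

/-- The union of the ranges of the left and right derivatives of `L` restricted to `G`. -/
def ranLR (L : ℝ → ℝ) (G : Set ℝ) : Set ℝ :=
  {d : ℝ | ∃ l ∈ G, HasDerivWithinAt L d (Set.Iio l) l ∨ HasDerivWithinAt L d (Set.Ioi l) l}

section Helpers

abbrev EE (r : ℝ) : ℝ≥0∞ := ENNReal.ofReal (Real.exp r)

lemma EE_ne_top (r : ℝ) : EE r ≠ ⊤ := ENNReal.ofReal_ne_top
lemma EE_pos (r : ℝ) : 0 < EE r := ENNReal.ofReal_pos.2 (Real.exp_pos r)
lemma EE_mul (a b : ℝ) : EE (a + b) = EE a * EE b := by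
  unfold EE; rw [Real.exp_add]; exact ENNReal.ofReal_mul (Real.exp_nonneg a)
lemma EE_mono {a b : ℝ} (h : a ≤ b) : EE a ≤ EE b :=
  ENNReal.ofReal_le_ofReal (Real.exp_le_exp.2 h)
lemma EE_rpow (r s : ℝ) : (EE r) ^ s = EE (r * s) := by
  rw [ENNReal.ofReal_rpow_of_pos (Real.exp_pos r)]
  congr 1
  rw [Real.rpow_def_of_pos (Real.exp_pos r), Real.log_exp]

lemma keyLe {x y : ℝ≥0∞} (h : ∀ ε : ℝ, 0 < ε → x ≤ EE ε * y) : x ≤ y := by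
  refine ENNReal.le_of_forall_pos_le_add fun ε hε hy => ?_
  by_cases hy0 : y = 0
  · have h1 := h 1 one_pos
    rw [hy0, mul_zero] at h1
    simpa [hy0] using le_trans h1 zero_le
  · set c : ℝ := (ε : ℝ) / y.toReal with hc
    have hyt : 0 < y.toReal := ENNReal.toReal_pos hy0 hy.ne
    have hcpos : 0 < c := div_pos hε hyt
    have hr : 0 < Real.log (1 + c) := Real.log_pos (by linarith)
    have h2 := h _ hr
    unfold EE at h2
    rw [Real.exp_log (by linarith)] at h2
    refine h2.trans ?_
    have hyeq : y = ENNReal.ofReal y.toReal := (ENNReal.ofReal_toReal hy.ne).symm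
    calc ENNReal.ofReal (1 + c) * y = ENNReal.ofReal (1 + c) * ENNReal.ofReal y.toReal := by
          rw [← hyeq]
      _ = ENNReal.ofReal ((1 + c) * y.toReal) := (ENNReal.ofReal_mul (by linarith)).symm
      _ = ENNReal.ofReal (y.toReal + (ε : ℝ)) := by
          rw [add_mul, one_mul, hc, div_mul_cancel₀ _ hyt.ne']
      _ = y + (ε : ℝ≥0∞) := by
          rw [ENNReal.ofReal_add hyt.le (by positivity : (0:ℝ) ≤ (ε:ℝ)), ← hyeq,
            ENNReal.ofReal_coe_nnreal]
      _ ≤ y + (ε : ℝ≥0∞) := le_rfl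

lemma limsup_sup_le {A : Type*} [Preorder A] (u v : A → ℝ≥0∞) :
    limsup (fun a => u a ⊔ v a) atTop ≤ limsup u atTop ⊔ limsup v atTop := by
  refine le_of_forall_gt_imp_ge_of_dense fun c hc => ?_
  rw [sup_lt_iff] at hc
  have hu := eventually_lt_of_limsup_lt hc.1
  have hv := eventually_lt_of_limsup_lt hc.2
  refine limsup_le_of_le (by isBoundedDefault) ?_
  filter_upwards [hu, hv] with a h1 h2
  exact sup_le h1.le h2.le

section PowLimsup
variable {A : Type*} [Preorder A] {t : A → ℝ}

lemma two_rpow_ev (ht : Tendsto t atTop (𝓝 (0:ℝ))) {ε : ℝ} (hε : 0 < ε) :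
    ∀ᶠ a in atTop, ((2 : ℝ≥0∞)) ^ (t a) ≤ EE ε := by
  have h2 : Tendsto (fun a => (2:ℝ) ^ (t a)) atTop (𝓝 1) := by
    have hcont : Continuous (fun s : ℝ => (2:ℝ) ^ s) := by
      rw [show (fun s : ℝ => (2:ℝ) ^ s) = fun s => Real.exp (Real.log 2 * s) from
        funext fun s => Real.rpow_def_of_pos (by norm_num) s]
      exact (Real.continuous_exp.comp (continuous_const.mul continuous_id))
    have := (hcont.tendsto 0).comp ht
    simpa [Function.comp_def] using this
  have hev : ∀ᶠ a in atTop, (2:ℝ) ^ (t a) ≤ Real.exp ε :=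
    h2.eventually_le_const (by nlinarith [Real.add_one_lt_exp hε.ne'])
  filter_upwards [hev] with a ha
  calc (2 : ℝ≥0∞) ^ (t a) = ENNReal.ofReal ((2:ℝ) ^ (t a)) := by
        rw [← ENNReal.ofReal_rpow_of_pos (by norm_num : (0:ℝ) < 2)]
        norm_num
    _ ≤ EE ε := ENNReal.ofReal_le_ofReal ha

lemma limsup_rpow_add_le (hpos : ∀ a, 0 < t a) (ht : Tendsto t atTop (𝓝 (0:ℝ)))
    (u v : A → ℝ≥0∞) :
    limsup (fun a => (u a + v a) ^ (t a)) atTop ≤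
      limsup (fun a => u a ^ (t a)) atTop ⊔ limsup (fun a => v a ^ (t a)) atTop := by
  refine keyLe fun ε hε => ?_
  have hev : ∀ᶠ a in atTop, (u a + v a) ^ (t a) ≤ EE ε * (u a ^ (t a) ⊔ v a ^ (t a)) := by
    filter_upwards [two_rpow_ev ht hε] with a h2
    have hmono : Monotone (fun x : ℝ≥0∞ => x ^ (t a)) :=
      fun x y hxy => ENNReal.rpow_le_rpow hxy (hpos a).le
    calc (u a + v a) ^ (t a) ≤ (2 * (u a ⊔ v a)) ^ (t a) := by
          refine hmono ?_
          rcases le_total (u a) (v a) with h | h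
          · calc u a + v a ≤ v a + v a := by gcongr
              _ = 2 * (u a ⊔ v a) := by rw [sup_eq_right.2 h, two_mul]
          · calc u a + v a ≤ u a + u a := by gcongr
              _ = 2 * (u a ⊔ v a) := by rw [sup_eq_left.2 h, two_mul]
      _ = (2:ℝ≥0∞) ^ (t a) * (u a ⊔ v a) ^ (t a) :=
          ENNReal.mul_rpow_of_nonneg _ _ (hpos a).le
      _ ≤ EE ε * (u a ^ (t a) ⊔ v a ^ (t a)) := by
          rw [hmono.map_sup]; exact mul_le_mul_left h2 _
  calc limsup (fun a => (u a + v a) ^ (t a)) atTop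
      ≤ limsup (fun a => EE ε * (u a ^ (t a) ⊔ v a ^ (t a))) atTop :=
        limsup_le_limsup hev
    _ = EE ε * limsup (fun a => u a ^ (t a) ⊔ v a ^ (t a)) atTop :=
        ENNReal.limsup_const_mul_of_ne_top (EE_ne_top ε)
    _ ≤ EE ε * (limsup (fun a => u a ^ (t a)) atTop ⊔ limsup (fun a => v a ^ (t a)) atTop) :=
        mul_le_mul_right (limsup_sup_le _ _) _

lemma limsup_rpow_sum_le (hpos : ∀ a, 0 < t a) (ht : Tendsto t atTop (𝓝 (0:ℝ)))
    {ι : Type*} (s : Finset ι) (f : ι → A → ℝ≥0∞) :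
    limsup (fun a => (∑ i ∈ s, f i a) ^ (t a)) atTop ≤
      s.sup (fun i => limsup (fun a => f i a ^ (t a)) atTop) := by
  induction s using Finset.cons_induction with
  | empty =>
      simp only [Finset.sum_empty, Finset.sup_empty]
      have : (fun a => (0:ℝ≥0∞) ^ (t a)) = fun _ => (0:ℝ≥0∞) := by
        funext a; exact ENNReal.zero_rpow_of_pos (hpos a)
      rw [this]
      exact limsup_le_of_le (by isBoundedDefault)
        (Eventually.of_forall fun _ => le_rfl)
  | cons i s hi ih =>
      simp only [Finset.sum_cons, Finset.sup_cons]
      refine (limsup_rpow_add_le hpos ht _ _).trans ?_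
      exact sup_le_sup le_rfl ih
end PowLimsup

lemma liminf_const_mul_of_ne {α : Type*} {f : Filter α} (u : α → ℝ≥0∞) {c : ℝ≥0∞}
    (h0 : c ≠ 0) (htop : c ≠ ⊤) :
    f.liminf (fun x => c * u x) = c * f.liminf u := by
  let g := fun x : ℝ≥0∞ => c * x
  have hg_bij : Function.Bijective g :=
    Function.bijective_iff_has_inverse.mpr
      ⟨fun x => c⁻¹ * x,
        ⟨fun x => by simp [g, ← mul_assoc, ENNReal.inv_mul_cancel h0 htop], fun x => by
          simp [g, ← mul_assoc, ENNReal.mul_inv_cancel h0 htop]⟩⟩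
  have hg_mono : StrictMono g :=
    Monotone.strictMono_of_injective (fun _ _ _ => by rwa [ENNReal.mul_le_mul_iff_right h0 htop]) hg_bij.1
  let g_iso := StrictMono.orderIsoOfSurjective g hg_mono hg_bij.2
  exact (OrderIso.liminf_apply g_iso).symm

lemma setLIntegral_biUnion_le {α : Type*} [MeasurableSpace α] (μ : Measure α) (f : α → ℝ≥0∞)
    {ι : Type*} [DecidableEq ι] (s : Finset ι) (B : ι → Set α) :
    ∫⁻ x in ⋃ i ∈ s, B i, f x ∂μ ≤ ∑ i ∈ s, ∫⁻ x in B i, f x ∂μ := by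
  induction s using Finset.induction with
  | empty => simp
  | @insert i s hi ih =>
      rw [Finset.set_biUnion_insert, Finset.sum_insert hi]
      exact (lintegral_union_le _ _ _).trans (by gcongr)

lemma compactUB {X : Type*} [TopologicalSpace X] [LocallyCompactSpace X] [MeasurableSpace X]
    {A : Type*} [Preorder A] (μ : A → Measure X) {t : A → ℝ} (hpos : ∀ a, 0 < t a)
    (ht : Tendsto t atTop (𝓝 (0:ℝ)))
    (hKG : ∀ K G : Set X, IsCompact K → IsOpen G → K ⊆ G →
      limsup (fun a => μ a K ^ (t a)) atTop ≤ liminf (fun a => μ a G ^ (t a)) atTop)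
    {K : Set X} (hK : IsCompact K) :
    limsup (fun a => μ a K ^ (t a)) atTop ≤
      ⨆ x ∈ K, ⨅ (G : Set X) (_ : IsOpen G) (_ : x ∈ G),
        liminf (fun a => μ a G ^ (t a)) atTop := by
  refine le_of_forall_gt_imp_ge_of_dense fun d hd => ?_
  have hx : ∀ x : K, ∃ C : Set X, IsCompact C ∧ (x : X) ∈ interior C ∧
      limsup (fun a => μ a C ^ (t a)) atTop ≤ d := by
    rintro ⟨x, hxK⟩
    have h1 : (⨅ (G : Set X) (_ : IsOpen G) (_ : x ∈ G),
        liminf (fun a => μ a G ^ (t a)) atTop) < d :=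
      lt_of_le_of_lt (le_iSup₂ (f := fun x _ => ⨅ (G : Set X) (_ : IsOpen G) (_ : x ∈ G),
        liminf (fun a => μ a G ^ (t a)) atTop) x hxK) hd
    simp only [iInf_lt_iff] at h1
    obtain ⟨G, hGo, hxG, hGlim⟩ := h1
    obtain ⟨C, hCcomp, hxC, hCG⟩ := exists_compact_subset hGo hxG
    exact ⟨C, hCcomp, hxC, (hKG C G hCcomp hGo hCG).trans hGlim.le⟩
  choose C hCc hCi hClim using hx
  have hcover : K ⊆ ⋃ x : K, interior (C x) := fun y hy =>
    mem_iUnion.2 ⟨⟨y, hy⟩, hCi ⟨y, hy⟩⟩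
  obtain ⟨s, hs⟩ := hK.elim_finite_subcover (fun x : K => interior (C x))
    (fun _ => isOpen_interior) hcover
  have hmeas : ∀ a, μ a K ≤ ∑ x ∈ s, μ a (C x) := fun a =>
    (measure_mono hs).trans ((measure_biUnion_finset_le _ _).trans
      (Finset.sum_le_sum fun i _ => measure_mono interior_subset))
  calc limsup (fun a => μ a K ^ (t a)) atTop
      ≤ limsup (fun a => (∑ x ∈ s, μ a (C x)) ^ (t a)) atTop :=
        limsup_le_limsup (Eventually.of_forall fun a =>
          ENNReal.rpow_le_rpow (hmeas a) (hpos a).le)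
    _ ≤ s.sup (fun x => limsup (fun a => μ a (C x) ^ (t a)) atTop) :=
        limsup_rpow_sum_le hpos ht s _
    _ ≤ d := Finset.sup_le fun x _ => hClim x


lemma ereal_between {b : EReal} {p q : ℝ} (h1 : (p : EReal) ≤ b) (h2 : b ≤ (q : EReal)) :
    ∃ r : ℝ, b = (r : EReal) ∧ p ≤ r ∧ r ≤ q := by
  lift b to ℝ using ⟨(h2.trans_lt (EReal.coe_lt_top q)).ne, ((EReal.bot_lt_coe p).trans_le h1).ne'⟩
  exact ⟨b, rfl, by exact_mod_cast h1, by exact_mod_cast h2⟩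

lemma log_biSup_exp_mul {X : Type*} (h : X → EReal) (el : X → ℝ≥0∞) (S : Set X) :
    ENNReal.log (⨆ x ∈ S, EReal.exp (h x) * el x)
      = ⨆ x ∈ S, (h x + ENNReal.log (el x)) := by
  have h1 := ENNReal.logOrderIso.map_iSup (fun x : X => ⨆ _ : x ∈ S, EReal.exp (h x) * el x)
  simp only [ENNReal.logOrderIso_apply] at h1
  rw [h1]
  refine iSup_congr fun x => ?_
  have h2 := ENNReal.logOrderIso.map_iSup (fun _ : x ∈ S => EReal.exp (h x) * el x)
  simp only [ENNReal.logOrderIso_apply] at h2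
  rw [h2]
  refine iSup_congr fun hx => ?_
  rw [ENNReal.log_mul_add, EReal.log_exp]

lemma log_iSup_exp_mul {X : Type*} (h : X → EReal) (el : X → ℝ≥0∞) :
    ENNReal.log (⨆ x : X, EReal.exp (h x) * el x)
      = ⨆ x : X, (h x + ENNReal.log (el x)) := by
  have h1 := ENNReal.logOrderIso.map_iSup (fun x : X => EReal.exp (h x) * el x)
  simp only [ENNReal.logOrderIso_apply] at h1
  rw [h1]
  exact iSup_congr fun x => by rw [ENNReal.log_mul_add, EReal.log_exp]

end Helpers

/-- Theorem (compact case), part (a). -/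
theorem statement0
    {X : Type*} [TopologicalSpace X] [T2Space X] [LocallyCompactSpace X]
    [MeasurableSpace X] [BorelSpace X]
    {A : Type*} [Preorder A] [IsDirected A (· ≤ ·)] [Nonempty A]
    (μ : A → Measure X) (t : A → ℝ)
    (hRadon : ∀ a, (μ a).InnerRegular) (hSub : ∀ a, μ a Set.univ ≤ 1)
    (hpos : ∀ a, 0 < t a) (hto0 : Tendsto t atTop (𝓝 (0 : ℝ)))
    (T : Set (X → EReal))
    (hTcont : ∀ h ∈ T, Continuous h) (hTtop : ∀ h ∈ T, ∀ x, h x ≠ ⊤)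
    -- (i) the tail condition
    (hTail : TailCondition μ t T)
    -- (ii) comparison of compact and open asymptotic measures
    (hKG : ∀ K G : Set X, IsCompact K → IsOpen G → K ⊆ G →
      Filter.limsup (fun a => μ a K ^ (t a)) Filter.atTop ≤
        Filter.liminf (fun a => μ a G ^ (t a)) Filter.atTop)
    -- (iii) uniform lower bound on Λ̄
    (m : ℝ) (hm : ∀ h ∈ T, (m : EReal) < LambdaBar μ t h)
    -- T ⊆ C_K(X)
    (hCK : ∀ h ∈ T, ∀ x : X, ∀ ε : ℝ, 0 < ε → ENNReal.ofReal ε < EReal.exp (h x) →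
      IsCompact {y : X | EReal.exp (h x) - ENNReal.ofReal ε ≤ EReal.exp (h y) ∧
        EReal.exp (h y) ≤ EReal.exp (h x) + ENNReal.ofReal ε}) :
    (∀ h ∈ T, LambdaExists μ t h) ∧
    ∃ M : ℝ, ∀ h ∈ T,
      LambdaBar μ t h =
        (⨆ x ∈ {x : X | (m : EReal) ≤ h x ∧ h x ≤ (M : EReal)}, (h x - lOne μ t x)) ∧
      LambdaBar μ t h = ⨆ x : X, (h x - lOne μ t x) := by
  classical
  haveI : (atTop : Filter A).NeBot := atTop_neBot_iff.2 ⟨‹_›, ‹_›⟩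
  -- the candidate rate in multiplicative (ℝ≥0∞) form
  let el : X → ℝ≥0∞ := fun x => ⨅ (G : Set X) (_ : IsOpen G) (_ : x ∈ G),
    liminf (fun a => μ a G ^ (t a)) atTop
  have hlOne : ∀ x : X, lOne μ t x = - ENNReal.log (el x) := fun _ => rfl
  obtain ⟨M₀, hM₀⟩ := hTail (Real.exp m) (Real.exp_pos m)
  set M : ℝ := max M₀ m with hMdef
  have hmM : m ≤ M := le_max_right _ _
  have key : ∀ h ∈ T,
      (liminf (expPow μ t h) atTop = limsup (expPow μ t h) atTop) ∧
      limsup (expPow μ t h) atTop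
        = (⨆ x ∈ {x : X | (m : EReal) ≤ h x ∧ h x ≤ (M : EReal)},
            EReal.exp (h x) * el x) ∧
      limsup (expPow μ t h) atTop = ⨆ x : X, EReal.exp (h x) * el x := by
    intro h hT
    have hcont := hTcont h hT
    -- uniform upper bound for the integral over a set where `h ≤ c`
    have hIbound : ∀ S : Set X, MeasurableSet S → ∀ c : ℝ, (∀ y ∈ S, h y ≤ (c : EReal)) →
        ∀ a : A, (∫⁻ y in S, EReal.exp ((((t a)⁻¹ : ℝ) : EReal) * h y) ∂ (μ a)) ^ (t a)
          ≤ EE c * (μ a S) ^ (t a) := by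
      intro S hSm c hc a
      have h1 : (∫⁻ y in S, EReal.exp ((((t a)⁻¹ : ℝ) : EReal) * h y) ∂ (μ a))
          ≤ EE ((t a)⁻¹ * c) * μ a S := by
        calc ∫⁻ y in S, EReal.exp ((((t a)⁻¹ : ℝ) : EReal) * h y) ∂ (μ a)
            ≤ ∫⁻ _ in S, EE ((t a)⁻¹ * c) ∂ (μ a) := by
              refine setLIntegral_mono' hSm fun y hy => ?_
              have : (((t a)⁻¹ : ℝ) : EReal) * h y ≤ (((t a)⁻¹ * c : ℝ) : EReal) := by
                rw [EReal.coe_mul]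
                exact mul_le_mul_of_nonneg_left (hc y hy)
                  (by exact_mod_cast (inv_pos.2 (hpos a)).le)
              calc EReal.exp ((((t a)⁻¹ : ℝ) : EReal) * h y)
                  ≤ EReal.exp (((t a)⁻¹ * c : ℝ) : EReal) := EReal.exp_monotone this
                _ = EE ((t a)⁻¹ * c) := EReal.exp_coe _
          _ = EE ((t a)⁻¹ * c) * μ a S := setLIntegral_const _ _
      calc (∫⁻ y in S, EReal.exp ((((t a)⁻¹ : ℝ) : EReal) * h y) ∂ (μ a)) ^ (t a)
          ≤ (EE ((t a)⁻¹ * c) * μ a S) ^ (t a) := ENNReal.rpow_le_rpow h1 (hpos a).le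
        _ = EE ((t a)⁻¹ * c * t a) * (μ a S) ^ (t a) := by
            rw [ENNReal.mul_rpow_of_nonneg _ _ (hpos a).le, EE_rpow]
        _ = EE c * (μ a S) ^ (t a) := by
            rw [show (t a)⁻¹ * c * t a = c by field_simp [(hpos a).ne']]
    -- lower bound
    have hLB : ∀ x : X, EReal.exp (h x) * el x ≤ liminf (expPow μ t h) atTop := by
      intro x
      refine keyLe fun ε hε => ?_
      by_cases hbot : h x = ⊥
      · simp [hbot]
      obtain ⟨r, hr⟩ : ∃ r : ℝ, h x = (r : EReal) := by
        lift h x to ℝ using ⟨hTtop h hT x, hbot⟩ with r hr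
        exact ⟨r, rfl⟩
      have hGo : IsOpen {y : X | ((r - ε : ℝ) : EReal) < h y} :=
        (isOpen_Ioi (a := ((r - ε : ℝ) : EReal))).preimage hcont
      have hxG : x ∈ {y : X | ((r - ε : ℝ) : EReal) < h y} := by
        simp only [mem_setOf_eq, hr]
        exact_mod_cast sub_lt_self r hε
      set G := {y : X | ((r - ε : ℝ) : EReal) < h y} with hGdef
      have hpt : ∀ a, EE (r - ε) * (μ a G) ^ (t a) ≤ expPow μ t h a := by
        intro a
        have hintg : EE ((t a)⁻¹ * (r - ε)) * μ a G
            ≤ ∫⁻ y, EReal.exp ((((t a)⁻¹ : ℝ) : EReal) * h y) ∂ (μ a) := by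
          calc EE ((t a)⁻¹ * (r - ε)) * μ a G
              = ∫⁻ _ in G, EE ((t a)⁻¹ * (r - ε)) ∂ (μ a) := (setLIntegral_const _ _).symm
            _ ≤ ∫⁻ y in G, EReal.exp ((((t a)⁻¹ : ℝ) : EReal) * h y) ∂ (μ a) := by
                refine setLIntegral_mono' hGo.measurableSet fun y hy => ?_
                have hle : (((t a)⁻¹ * (r - ε) : ℝ) : EReal) ≤ (((t a)⁻¹ : ℝ) : EReal) * h y := by
                  rw [EReal.coe_mul]
                  exact mul_le_mul_of_nonneg_left (le_of_lt hy)
                    (by exact_mod_cast (inv_pos.2 (hpos a)).le)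
                calc EE ((t a)⁻¹ * (r - ε))
                    = EReal.exp (((t a)⁻¹ * (r - ε) : ℝ) : EReal) := (EReal.exp_coe _).symm
                  _ ≤ EReal.exp ((((t a)⁻¹ : ℝ) : EReal) * h y) := EReal.exp_monotone hle
            _ ≤ ∫⁻ y, EReal.exp ((((t a)⁻¹ : ℝ) : EReal) * h y) ∂ (μ a) :=
                setLIntegral_le_lintegral _ _
        have h2 := ENNReal.rpow_le_rpow hintg (hpos a).le
        rw [ENNReal.mul_rpow_of_nonneg _ _ (hpos a).le, EE_rpow,
          show (t a)⁻¹ * (r - ε) * t a = r - ε by field_simp [(hpos a).ne']] at h2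
        exact h2
      have hlim : EE (r - ε) * liminf (fun a => μ a G ^ (t a)) atTop
          ≤ liminf (expPow μ t h) atTop := by
        rw [← liminf_const_mul_of_ne _ (EE_pos _).ne' (EE_ne_top _)]
        exact liminf_le_liminf (Eventually.of_forall hpt)
      have helx : el x ≤ liminf (fun a => μ a G ^ (t a)) atTop :=
        iInf_le_of_le G (iInf_le_of_le hGo (iInf_le_of_le hxG le_rfl))
      calc EReal.exp (h x) * el x = EE r * el x := by rw [hr, EReal.exp_coe]
        _ = EE ε * (EE (r - ε) * el x) := by
            rw [← mul_assoc, ← EE_mul, show ε + (r - ε) = r by ring]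
        _ ≤ EE ε * (EE (r - ε) * liminf (fun a => μ a G ^ (t a)) atTop) :=
            mul_le_mul_right (mul_le_mul_right helx _) _
        _ ≤ EE ε * liminf (expPow μ t h) atTop := mul_le_mul_right hlim _
    -- upper bound
    have hUB : limsup (expPow μ t h) atTop
        ≤ ⨆ x ∈ {x : X | (m : EReal) ≤ h x ∧ h x ≤ (M : EReal)}, EReal.exp (h x) * el x := by
      set S1 := {x : X | h x < (m : EReal)} with hS1def
      set Bset := {x : X | (m : EReal) ≤ h x ∧ h x ≤ (M : EReal)} with hBsetdef
      set S3 := {x : X | (M : EReal) < h x} with hS3def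
      set SB := ⨆ x ∈ Bset, EReal.exp (h x) * el x with hSBdef
      have hS1o : IsOpen S1 := (isOpen_Iio (a := ((m : ℝ) : EReal))).preimage hcont
      have hBc : IsClosed Bset :=
        (isClosed_Icc (a := ((m : ℝ) : EReal)) (b := ((M : ℝ) : EReal))).preimage hcont
      -- the low part
      have hLow : limsup (fun a =>
          (∫⁻ y in S1, EReal.exp ((((t a)⁻¹ : ℝ) : EReal) * h y) ∂ (μ a)) ^ (t a)) atTop
            ≤ EE m := by
        refine limsup_le_of_le (by isBoundedDefault) (Eventually.of_forall fun a => ?_)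
        calc (∫⁻ y in S1, EReal.exp ((((t a)⁻¹ : ℝ) : EReal) * h y) ∂ (μ a)) ^ (t a)
            ≤ EE m * (μ a S1) ^ (t a) :=
              hIbound S1 hS1o.measurableSet m (fun y hy => le_of_lt hy) a
          _ ≤ EE m * 1 := by
              refine mul_le_mul_right ?_ _
              exact ENNReal.rpow_le_one ((measure_mono (subset_univ _)).trans (hSub a))
                (hpos a).le
          _ = EE m := mul_one _
      -- the tail part
      have hTailB : limsup (fun a =>
          (∫⁻ y in S3, EReal.exp ((((t a)⁻¹ : ℝ) : EReal) * h y) ∂ (μ a)) ^ (t a)) atTop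
            < EE m := by
        refine lt_of_le_of_lt ?_ (hM₀ h hT)
        refine limsup_le_limsup (Eventually.of_forall fun a => ?_)
        refine ENNReal.rpow_le_rpow (lintegral_mono_set fun y hy => ?_) (hpos a).le
        exact lt_of_le_of_lt (EReal.coe_le_coe_iff.2 (le_max_left M₀ m)) hy
      -- splitting
      have hcover3 : (univ : Set X) ⊆ S1 ∪ (Bset ∪ S3) := by
        intro x _
        rcases lt_or_ge (h x) ((m : ℝ) : EReal) with h1 | h1
        · exact Or.inl h1
        rcases le_or_gt (h x) ((M : ℝ) : EReal) with h2 | h2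
        · exact Or.inr (Or.inl ⟨h1, h2⟩)
        · exact Or.inr (Or.inr h2)
      have hsplit : ∀ a, expPow μ t h a ≤
          ((∫⁻ y in S1, EReal.exp ((((t a)⁻¹ : ℝ) : EReal) * h y) ∂ (μ a)) +
            ((∫⁻ y in Bset, EReal.exp ((((t a)⁻¹ : ℝ) : EReal) * h y) ∂ (μ a)) +
              (∫⁻ y in S3, EReal.exp ((((t a)⁻¹ : ℝ) : EReal) * h y) ∂ (μ a)))) ^ (t a) := by
        intro a
        refine ENNReal.rpow_le_rpow ?_ (hpos a).le
        calc ∫⁻ y, EReal.exp ((((t a)⁻¹ : ℝ) : EReal) * h y) ∂ (μ a)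
            = ∫⁻ y in univ, EReal.exp ((((t a)⁻¹ : ℝ) : EReal) * h y) ∂ (μ a) :=
              (setLIntegral_univ _).symm
          _ ≤ ∫⁻ y in S1 ∪ (Bset ∪ S3), EReal.exp ((((t a)⁻¹ : ℝ) : EReal) * h y) ∂ (μ a) :=
              lintegral_mono_set hcover3
          _ ≤ (∫⁻ y in S1, EReal.exp ((((t a)⁻¹ : ℝ) : EReal) * h y) ∂ (μ a)) +
              (∫⁻ y in Bset ∪ S3, EReal.exp ((((t a)⁻¹ : ℝ) : EReal) * h y) ∂ (μ a)) :=
              lintegral_union_le _ _ _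
          _ ≤ _ := add_le_add_right (lintegral_union_le _ _ _) _
      have hLsplit : limsup (expPow μ t h) atTop ≤
          limsup (fun a =>
            (∫⁻ y in S1, EReal.exp ((((t a)⁻¹ : ℝ) : EReal) * h y) ∂ (μ a)) ^ (t a)) atTop ⊔
          (limsup (fun a =>
            (∫⁻ y in Bset, EReal.exp ((((t a)⁻¹ : ℝ) : EReal) * h y) ∂ (μ a)) ^ (t a)) atTop ⊔
           limsup (fun a =>
            (∫⁻ y in S3, EReal.exp ((((t a)⁻¹ : ℝ) : EReal) * h y) ∂ (μ a)) ^ (t a)) atTop) := by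
        calc limsup (expPow μ t h) atTop
            ≤ limsup (fun a =>
              ((∫⁻ y in S1, EReal.exp ((((t a)⁻¹ : ℝ) : EReal) * h y) ∂ (μ a)) +
                ((∫⁻ y in Bset, EReal.exp ((((t a)⁻¹ : ℝ) : EReal) * h y) ∂ (μ a)) +
                  (∫⁻ y in S3, EReal.exp ((((t a)⁻¹ : ℝ) : EReal) * h y) ∂ (μ a)))) ^ (t a))
                atTop := limsup_le_limsup (Eventually.of_forall hsplit)
          _ ≤ limsup (fun a =>
              (∫⁻ y in S1, EReal.exp ((((t a)⁻¹ : ℝ) : EReal) * h y) ∂ (μ a)) ^ (t a)) atTop ⊔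
              limsup (fun a =>
              ((∫⁻ y in Bset, EReal.exp ((((t a)⁻¹ : ℝ) : EReal) * h y) ∂ (μ a)) +
                (∫⁻ y in S3, EReal.exp ((((t a)⁻¹ : ℝ) : EReal) * h y) ∂ (μ a))) ^ (t a)) atTop :=
              limsup_rpow_add_le hpos hto0 _ _
          _ ≤ _ := sup_le_sup_left (limsup_rpow_add_le hpos hto0 _ _) _
      have hEmL : EE m < limsup (expPow μ t h) atTop := by
        have hm' : (m : EReal) < ENNReal.log (limsup (expPow μ t h) atTop) := hm h hT
        have h2 : EReal.exp ((m : ℝ) : EReal)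
            < EReal.exp (ENNReal.log (limsup (expPow μ t h) atTop)) :=
          EReal.exp_lt_exp_iff.2 hm'
        rwa [EReal.exp_coe, ENNReal.exp_log] at h2
      -- the band part
      have hBandB : limsup (fun a =>
          (∫⁻ y in Bset, EReal.exp ((((t a)⁻¹ : ℝ) : EReal) * h y) ∂ (μ a)) ^ (t a)) atTop
            ≤ SB := by
        refine keyLe fun δ hδ => ?_
        set d0 : ℝ := min δ (Real.log 2) with hd0def
        have hd0 : 0 < d0 := lt_min hδ (Real.log_pos one_lt_two)
        obtain ⟨n, hn⟩ := exists_nat_gt ((M - m) / d0)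
        have hMm : (0 : ℝ) ≤ M - m := sub_nonneg.2 hmM
        have hn0 : 0 < n := by
          rcases Nat.eq_zero_or_pos n with h0 | h0
          · exfalso
            rw [h0] at hn
            exact absurd hn (by push_cast; exact not_lt.2 (div_nonneg hMm hd0.le))
          · exact h0
        have hnR : (0 : ℝ) < n := by exact_mod_cast hn0
        set δ' : ℝ := (M - m) / n with hδ'def
        have hδ'0 : (0 : ℝ) ≤ δ' := div_nonneg hMm hnR.le
        have hδ'lt : δ' < d0 := by
          rw [hδ'def, div_lt_iff₀ hnR]
          rw [div_lt_iff₀ hd0] at hn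
          linarith [mul_comm (n : ℝ) d0]
        set c : ℕ → ℝ := fun i => m + i * δ' with hcdef
        have hcsucc : ∀ i : ℕ, c (i + 1) = c i + δ' := by
          intro i; simp only [hcdef]; push_cast; ring
        have hcm : ∀ i : ℕ, m ≤ c i := fun i => le_add_of_nonneg_right (by positivity)
        have hcn : c n = M := by
          simp only [hcdef, hδ'def]
          field_simp
          ring
        have hcmono : Monotone c := by
          intro i j hij
          simp only [hcdef]
          have : (i : ℝ) ≤ (j : ℝ) := by exact_mod_cast hij
          nlinarith
        set Bi : ℕ → Set X := fun i =>
          {y : X | ((c i : ℝ) : EReal) ≤ h y ∧ h y ≤ ((c (i + 1) : ℝ) : EReal)} with hBidef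
        have hBic : ∀ i, IsClosed (Bi i) := fun i =>
          (isClosed_Icc (a := ((c i : ℝ) : EReal)) (b := ((c (i + 1) : ℝ) : EReal))).preimage hcont
        have hcover : Bset ⊆ ⋃ i ∈ Finset.range n, Bi i := by
          rintro x ⟨hx1, hx2⟩
          obtain ⟨r, hr, hrm, hrM⟩ := ereal_between hx1 hx2
          by_cases hδ'z : δ' = 0
          · have hMeq : M = m := by
              have := hcn
              simp only [hcdef, hδ'z, mul_zero, add_zero] at this
              exact this.symm
            refine mem_iUnion₂.2 ⟨0, Finset.mem_range.2 hn0, ?_, ?_⟩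
            · show ((c 0 : ℝ) : EReal) ≤ h x
              have : c 0 = m := by simp [hcdef]
              rw [this]; exact hx1
            · show h x ≤ ((c 1 : ℝ) : EReal)
              have : c 1 = M := by
                simp only [hcdef, hδ'z, mul_zero, add_zero, Nat.cast_one, mul_comm]
                simp [hMeq]
              rw [this]; exact hx2
          · have hδ'p : (0 : ℝ) < δ' := lt_of_le_of_ne hδ'0 (Ne.symm hδ'z)
            set k := ⌊(r - m) / δ'⌋₊ with hkdef
            set i := min k (n - 1) with hidef
            have hin : i < n := lt_of_le_of_lt (min_le_right _ _) (Nat.sub_lt hn0 one_pos)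
            have hik : (i : ℝ) ≤ (r - m) / δ' := by
              refine le_trans ?_ (Nat.floor_le (div_nonneg (sub_nonneg.2 hrm) hδ'p.le))
              exact_mod_cast min_le_left k (n - 1)
            have hci : c i ≤ r := by
              have h1 : (i : ℝ) * δ' ≤ r - m := (le_div_iff₀ hδ'p).1 hik
              simp only [hcdef]; linarith
            have hci1 : r ≤ c (i + 1) := by
              rcases le_or_gt k (n - 1) with hk | hk
              · have hik2 : i = k := min_eq_left hk
                have h1 : (r - m) / δ' < (k : ℝ) + 1 := Nat.lt_floor_add_one _
                have h2 : r - m < ((k : ℝ) + 1) * δ' := (div_lt_iff₀ hδ'p).1 h1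
                simp only [hcdef, hik2]
                push_cast
                linarith
              · have hik2 : i = n - 1 := min_eq_right hk.le
                have h3 : i + 1 = n := by omega
                rw [h3, hcn]
                exact hrM
            exact mem_iUnion₂.2 ⟨i, Finset.mem_range.2 hin,
              by rw [hr]; exact_mod_cast hci, by rw [hr]; exact_mod_cast hci1⟩
        have hIBsum : ∀ a,
            (∫⁻ y in Bset, EReal.exp ((((t a)⁻¹ : ℝ) : EReal) * h y) ∂ (μ a))
              ≤ ∑ i ∈ Finset.range n,
                ∫⁻ y in Bi i, EReal.exp ((((t a)⁻¹ : ℝ) : EReal) * h y) ∂ (μ a) := fun a =>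
          (lintegral_mono_set hcover).trans (setLIntegral_biUnion_le _ _ _ _)
        have hper : ∀ i ∈ Finset.range n, limsup (fun a =>
            (∫⁻ y in Bi i, EReal.exp ((((t a)⁻¹ : ℝ) : EReal) * h y) ∂ (μ a)) ^ (t a)) atTop
              ≤ EE δ * SB := by
          intro i hi
          rw [Finset.mem_range] at hi
          rcases eq_empty_or_nonempty (Bi i) with hBe | ⟨x₀, hx₀⟩
          · refine le_trans ?_ zero_le
            refine limsup_le_of_le (by isBoundedDefault) (Eventually.of_forall fun a => ?_)
            rw [hBe, Measure.restrict_empty, lintegral_zero_measure,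
              ENNReal.zero_rpow_of_pos (hpos a)]
          · obtain ⟨r₀, hr₀, hr₀l, hr₀u⟩ := ereal_between hx₀.1 hx₀.2
            have h2e : Real.exp (c (i + 1)) < 2 * Real.exp (c i) := by
              rw [hcsucc i, Real.exp_add]
              have hlt2 : Real.exp δ' < 2 := by
                calc Real.exp δ' < Real.exp (Real.log 2) :=
                      Real.exp_lt_exp.2 (lt_of_lt_of_le hδ'lt (min_le_right _ _))
                  _ = 2 := Real.exp_log two_pos
              nlinarith [Real.exp_pos (c i)]
            set η := (2 * Real.exp (c i) - Real.exp (c (i + 1))) / 2 with hηdef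
            have hη : 0 < η := by rw [hηdef]; linarith
            set ε := Real.exp (c (i + 1)) - Real.exp (c i) + η with hεdef
            have heii : Real.exp (c i) ≤ Real.exp (c (i + 1)) :=
              Real.exp_le_exp.2 (by rw [hcsucc i]; linarith)
            have hεpos : 0 < ε := by rw [hεdef]; linarith
            have hεr₀ : ε < Real.exp r₀ := by
              have h5 : Real.exp (c i) ≤ Real.exp r₀ := Real.exp_le_exp.2 hr₀l
              rw [hεdef, hηdef]; linarith
            have hof : ENNReal.ofReal ε < EReal.exp (h x₀) := by
              rw [hr₀, EReal.exp_coe]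
              exact (ENNReal.ofReal_lt_ofReal_iff (Real.exp_pos r₀)).2 hεr₀
            have hC := hCK h hT x₀ ε hεpos hof
            have hsub : Bi i ⊆ {y : X |
                EReal.exp (h x₀) - ENNReal.ofReal ε ≤ EReal.exp (h y) ∧
                EReal.exp (h y) ≤ EReal.exp (h x₀) + ENNReal.ofReal ε} := by
              rintro y ⟨hy1, hy2⟩
              have hyl : EE (c i) ≤ EReal.exp (h y) := by
                rw [show EE (c i) = EReal.exp ((c i : ℝ) : EReal) from (EReal.exp_coe _).symm]
                exact EReal.exp_monotone hy1
              have hyu : EReal.exp (h y) ≤ EE (c (i + 1)) := by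
                rw [show EE (c (i+1)) = EReal.exp ((c (i+1) : ℝ) : EReal) from
                  (EReal.exp_coe _).symm]
                exact EReal.exp_monotone hy2
              constructor
              · refine tsub_le_iff_right.2 ?_
                rw [hr₀, EReal.exp_coe]
                calc EE r₀ ≤ EE (c (i + 1)) := EE_mono hr₀u
                  _ ≤ EE (c i) + ENNReal.ofReal ε := by
                      rw [← ENNReal.ofReal_add (Real.exp_pos _).le hεpos.le]
                      exact ENNReal.ofReal_le_ofReal (by rw [hεdef]; linarith)
                  _ ≤ EReal.exp (h y) + ENNReal.ofReal ε := add_le_add_left hyl _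
              · calc EReal.exp (h y) ≤ EE (c (i + 1)) := hyu
                  _ ≤ EE r₀ + ENNReal.ofReal ε := by
                      rw [← ENNReal.ofReal_add (Real.exp_pos _).le hεpos.le]
                      refine ENNReal.ofReal_le_ofReal ?_
                      have h5 : Real.exp (c i) ≤ Real.exp r₀ := Real.exp_le_exp.2 hr₀l
                      rw [hεdef]; linarith
                  _ = EReal.exp (h x₀) + ENNReal.ofReal ε := by rw [hr₀, EReal.exp_coe]
            have hBico : IsCompact (Bi i) := hC.of_isClosed_subset (hBic i) hsub
            have hcomp := compactUB μ hpos hto0 hKG hBico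
            have hbound : ∀ a,
                (∫⁻ y in Bi i, EReal.exp ((((t a)⁻¹ : ℝ) : EReal) * h y) ∂ (μ a)) ^ (t a)
                  ≤ EE (c (i + 1)) * (μ a (Bi i)) ^ (t a) := fun a =>
              hIbound (Bi i) (hBic i).measurableSet (c (i + 1)) (fun y hy => hy.2) a
            calc limsup (fun a =>
                (∫⁻ y in Bi i, EReal.exp ((((t a)⁻¹ : ℝ) : EReal) * h y) ∂ (μ a)) ^ (t a)) atTop
                ≤ limsup (fun a => EE (c (i + 1)) * (μ a (Bi i)) ^ (t a)) atTop :=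
                  limsup_le_limsup (Eventually.of_forall hbound)
              _ = EE (c (i + 1)) * limsup (fun a => (μ a (Bi i)) ^ (t a)) atTop :=
                  ENNReal.limsup_const_mul_of_ne_top (EE_ne_top _)
              _ ≤ EE (c (i + 1)) * ⨆ x ∈ Bi i, el x := mul_le_mul_right hcomp _
              _ ≤ EE δ * SB := by
                  rw [ENNReal.mul_iSup]
                  refine iSup_le fun x => ?_
                  rw [ENNReal.mul_iSup]
                  refine iSup_le fun hx => ?_
                  have hxB : x ∈ Bset := by
                    refine ⟨le_trans ?_ hx.1, le_trans hx.2 ?_⟩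
                    · exact_mod_cast hcm i
                    · have h6 : c (i + 1) ≤ M := hcn ▸ hcmono hi
                      exact_mod_cast h6
                  have hterm : EE (c (i + 1)) * el x ≤ EE δ * (EReal.exp (h x) * el x) := by
                    rw [← mul_assoc]
                    refine mul_le_mul_left ?_ (el x)
                    calc EE (c (i + 1)) = EE δ' * EE (c i) := by
                          rw [← EE_mul, show δ' + c i = c (i + 1) from by rw [hcsucc i]; ring]
                      _ ≤ EE δ * EReal.exp (h x) := by
                          refine mul_le_mul' (EE_mono (lt_of_lt_of_le hδ'lt (min_le_left _ _)).le)
                            ?_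
                          rw [show EE (c i) = EReal.exp ((c i : ℝ) : EReal) from
                            (EReal.exp_coe _).symm]
                          exact EReal.exp_monotone hx.1
                  refine hterm.trans (mul_le_mul_right ?_ _)
                  exact le_iSup₂ (f := fun x _ => EReal.exp (h x) * el x) x hxB
        calc limsup (fun a =>
            (∫⁻ y in Bset, EReal.exp ((((t a)⁻¹ : ℝ) : EReal) * h y) ∂ (μ a)) ^ (t a)) atTop
            ≤ limsup (fun a => (∑ i ∈ Finset.range n,
                ∫⁻ y in Bi i, EReal.exp ((((t a)⁻¹ : ℝ) : EReal) * h y) ∂ (μ a)) ^ (t a))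
                atTop :=
              limsup_le_limsup (Eventually.of_forall fun a =>
                ENNReal.rpow_le_rpow (hIBsum a) (hpos a).le)
          _ ≤ (Finset.range n).sup (fun i => limsup (fun a =>
              (∫⁻ y in Bi i, EReal.exp ((((t a)⁻¹ : ℝ) : EReal) * h y) ∂ (μ a)) ^ (t a)) atTop)
              := limsup_rpow_sum_le hpos hto0 _ _
          _ ≤ EE δ * SB := Finset.sup_le hper
      by_contra hcon
      push_neg at hcon
      have hlt : (limsup (fun a =>
            (∫⁻ y in S1, EReal.exp ((((t a)⁻¹ : ℝ) : EReal) * h y) ∂ (μ a)) ^ (t a)) atTop ⊔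
          (limsup (fun a =>
            (∫⁻ y in Bset, EReal.exp ((((t a)⁻¹ : ℝ) : EReal) * h y) ∂ (μ a)) ^ (t a)) atTop ⊔
           limsup (fun a =>
            (∫⁻ y in S3, EReal.exp ((((t a)⁻¹ : ℝ) : EReal) * h y) ∂ (μ a)) ^ (t a)) atTop))
          < limsup (expPow μ t h) atTop :=
        sup_lt_iff.2 ⟨lt_of_le_of_lt hLow hEmL,
          sup_lt_iff.2 ⟨lt_of_le_of_lt hBandB hcon, lt_trans hTailB hEmL⟩⟩
      exact absurd hLsplit (not_le.2 hlt)
    have hBX : (⨆ x ∈ {x : X | (m : EReal) ≤ h x ∧ h x ≤ (M : EReal)},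
        EReal.exp (h x) * el x) ≤ ⨆ x : X, EReal.exp (h x) * el x :=
      iSup₂_le fun x _ => le_iSup (fun x => EReal.exp (h x) * el x) x
    have hXl : (⨆ x : X, EReal.exp (h x) * el x) ≤ liminf (expPow μ t h) atTop :=
      iSup_le hLB
    have hlL : liminf (expPow μ t h) atTop ≤ limsup (expPow μ t h) atTop :=
      liminf_le_limsup
    exact ⟨le_antisymm hlL (hUB.trans (hBX.trans hXl)),
      le_antisymm hUB (hBX.trans (hXl.trans hlL)),
      le_antisymm (hUB.trans hBX) (hXl.trans hlL)⟩
  refine ⟨fun h hT => congrArg ENNReal.log (key h hT).1, M, fun h hT => ⟨?_, ?_⟩⟩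
  · have h2 := congrArg ENNReal.log (key h hT).2.1
    rw [log_biSup_exp_mul] at h2
    refine h2.trans ?_
    refine iSup_congr fun x => iSup_congr fun hx => ?_
    rw [hlOne, sub_eq_add_neg, neg_neg]
  · have h3 := congrArg ENNReal.log (key h hT).2.2
    rw [log_iSup_exp_mul] at h3
    refine h3.trans ?_
    refine iSup_congr fun x => ?_
    rw [hlOne, sub_eq_add_neg, neg_neg]

end
end

section
/- Let X be a locally compact Hausdorff space and let T be a set of continuous functions h : X → [-∞,∞) such that: (i) T satisfies the tail condition for (μ_α^{t_α}); (ii) limsup_α μ_α(K)^{t_α} ≤ liminf_α μ_α(G)^{t_α} for every compact K ⊂ X and every open G ⊂ X with K ⊂ G; (iii) there is a real m with Λ̄(h) > m for all h ∈ T. If moreover (μ_α) is exponentially tight with respect to (t_α), then Λ(h) exists for every h ∈ T, and there are a real M and a compact set K ⊂ X such that Λ(h) = sup_{x ∈ K ∩ {m ≤ h ≤ M}} (h(x) − l_1(x)) = sup_{x ∈ X} (h(x) − l_1(x)) for all h ∈ T. -/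
open Filter MeasureTheory Topology Set
open scoped ENNReal NNReal

noncomputable section

variable {X : Type*} [TopologicalSpace X] [MeasurableSpace X]
variable {A : Type*} [Preorder A]

/-! ### Auxiliary lemmas -/

section AuxLDP

variable {X : Type*} [TopologicalSpace X] [MeasurableSpace X]
variable {A : Type*} [Preorder A] [IsDirected A (· ≤ ·)] [Nonempty A]

/-- The basic asymptotic rate quantity `exp(-l₁(x))` as an `ℝ≥0∞`. -/
noncomputable def Ifn (μ : A → Measure X) (t : A → ℝ) (x : X) : ℝ≥0∞ :=
  ⨅ (G : Set X) (_ : IsOpen G) (_ : x ∈ G),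
    Filter.liminf (fun a => μ a G ^ (t a)) Filter.atTop

lemma lOne_eq (μ : A → Measure X) (t : A → ℝ) (x : X) :
    lOne μ t x = - ENNReal.log (Ifn μ t x) := rfl

lemma atTop_nebot : (atTop : Filter A).NeBot :=
  Filter.atTop_neBot_iff.mpr ⟨inferInstance, inferInstance⟩

/-- Limit characterization of bounds along `𝓝[>] 0`. -/
lemma le_of_nhdsGT {a L : ℝ≥0∞} {g : ℝ → ℝ≥0∞}
    (hg : Tendsto g (𝓝[>] (0:ℝ)) (𝓝 L))
    (hle : ∀ δ : ℝ, 0 < δ → δ ≤ 1 → a ≤ g δ) : a ≤ L := by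
  by_contra hcon
  push_neg at hcon
  obtain ⟨b, hLb, hba⟩ := exists_between hcon
  have h1 : ∀ᶠ δ in 𝓝[>] (0:ℝ), g δ < b := hg.eventually_lt_const hLb
  have h2 : ∀ᶠ δ in 𝓝[>] (0:ℝ), δ ≤ 1 :=
    (eventually_le_nhds (by norm_num : (0:ℝ) < 1)).filter_mono nhdsWithin_le_nhds
  have h3 : ∀ᶠ δ in 𝓝[>] (0:ℝ), (0:ℝ) < δ := eventually_mem_nhdsWithin
  obtain ⟨δ, hδb, hδ1, hδ0⟩ := (h1.and (h2.and h3)).exists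
  exact lt_irrefl a (((hle δ hδ0 hδ1).trans_lt hδb).trans hba)

/-- limsup of a finite sup is at most the sup of the limsups. -/
lemma limsup_finset_sup_le {ι : Type*} (s : Finset ι) (u : ι → A → ℝ≥0∞) :
    Filter.limsup (fun a => s.sup (fun i => u i a)) Filter.atTop ≤
      s.sup (fun i => Filter.limsup (u i) Filter.atTop) := by
  haveI : (atTop : Filter A).NeBot := atTop_nebot
  set L := s.sup (fun i => Filter.limsup (u i) Filter.atTop) with hL
  rcases eq_or_ne L ⊤ with h | h
  · exact h ▸ le_top
  · refine le_of_forall_gt_imp_ge_of_dense fun b hb => ?_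
    have hev : ∀ i ∈ s, ∀ᶠ a in (atTop : Filter A), u i a < b := fun i hi =>
      eventually_lt_of_limsup_lt (lt_of_le_of_lt (Finset.le_sup (f := fun i => Filter.limsup (u i) Filter.atTop) hi) hb)
    have hev2 : ∀ᶠ a in (atTop : Filter A), ∀ i ∈ s, u i a < b :=
      (Filter.eventually_all_finset s).2 hev
    exact limsup_le_of_le (by isBoundedDefault)
      (hev2.mono fun a ha => Finset.sup_le fun i hi => (ha i hi).le)

/-- Key subadditivity of `limsup (·^t)` for finite sums. -/
lemma limsup_sum_rpow_le {ι : Type*} (t : A → ℝ) (hpos : ∀ a, 0 < t a)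
    (hto0 : Tendsto t atTop (𝓝 (0 : ℝ))) (s : Finset ι) (F : ι → A → ℝ≥0∞) :
    Filter.limsup (fun a => (∑ i ∈ s, F i a) ^ (t a)) Filter.atTop ≤
      s.sup (fun i => Filter.limsup (fun a => F i a ^ (t a)) Filter.atTop) := by
  haveI : (atTop : Filter A).NeBot := atTop_nebot
  rcases Finset.eq_empty_or_nonempty s with rfl | hs
  · have hz : ∀ a : A, ((0:ℝ≥0∞)) ^ (t a) = 0 := fun a => ENNReal.zero_rpow_of_pos (hpos a)
    simp only [Finset.sum_empty, Finset.sup_empty, hz]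
    simpa using (Filter.limsup_const (0:ℝ≥0∞) (f := (atTop : Filter A))).le
  · have hcard : 0 < ((s.card : ℝ)) := by exact_mod_cast Finset.card_pos.mpr hs
    set L := s.sup (fun i => Filter.limsup (fun a => F i a ^ (t a)) Filter.atTop) with hLdef
    have key : ∀ δ : ℝ, 0 < δ → δ ≤ 1 →
        Filter.limsup (fun a => (∑ i ∈ s, F i a) ^ (t a)) Filter.atTop ≤
          ENNReal.ofReal (1 + δ) * L := by
      intro δ hδ hδ1
      have htend : Tendsto (fun a => ((s.card : ℝ)) ^ (t a)) atTop (𝓝 1) := by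
        have h1 : Tendsto (fun a => Real.log s.card * t a) atTop (𝓝 0) := by
          simpa using hto0.const_mul (Real.log s.card)
        have h2 := (Real.continuous_exp.tendsto 0).comp h1
        simp only [Real.exp_zero] at h2
        refine h2.congr fun a => ?_
        simp only [Function.comp_apply]
        rw [← Real.rpow_def_of_pos hcard]
      have hev : ∀ᶠ a in (atTop : Filter A), ((s.card : ℝ)) ^ (t a) ≤ 1 + δ :=
        htend.eventually_le_const (by linarith)
      have hev2 : ∀ᶠ a in (atTop : Filter A), (∑ i ∈ s, F i a) ^ (t a) ≤
          ENNReal.ofReal (1 + δ) * s.sup (fun i => F i a ^ (t a)) := by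
        filter_upwards [hev] with a ha
        have h1 : (∑ i ∈ s, F i a) ≤ (s.card : ℝ≥0∞) * s.sup (fun i => F i a) := by
          have := Finset.sum_le_card_nsmul s (fun i => F i a) (s.sup fun i => F i a)
            (fun i hi => Finset.le_sup (f := fun i => F i a) hi)
          simpa [nsmul_eq_mul] using this
        calc (∑ i ∈ s, F i a) ^ (t a)
            ≤ ((s.card : ℝ≥0∞) * s.sup (fun i => F i a)) ^ (t a) :=
              ENNReal.rpow_le_rpow h1 (hpos a).le
          _ = ((s.card : ℝ≥0∞) ^ (t a)) * (s.sup (fun i => F i a)) ^ (t a) :=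
              ENNReal.mul_rpow_of_nonneg _ _ (hpos a).le
          _ = ((s.card : ℝ≥0∞) ^ (t a)) * s.sup (fun i => F i a ^ (t a)) := by
              congr 1
              exact Finset.comp_sup_eq_sup_comp (fun z => z ^ (t a))
                (fun x y => Monotone.map_max (fun p q hpq => ENNReal.rpow_le_rpow hpq (hpos a).le))
                (by simpa using ENNReal.zero_rpow_of_pos (hpos a))
          _ ≤ ENNReal.ofReal (1 + δ) * s.sup (fun i => F i a ^ (t a)) := by
              refine mul_le_mul_left ?_ _
              have hc : ((s.card : ℝ≥0∞)) ^ (t a) = ENNReal.ofReal (((s.card : ℝ)) ^ (t a)) := by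
                rw [← ENNReal.ofReal_rpow_of_pos hcard, ENNReal.ofReal_natCast]
              rw [hc]
              exact ENNReal.ofReal_le_ofReal ha
      calc Filter.limsup (fun a => (∑ i ∈ s, F i a) ^ (t a)) Filter.atTop
          ≤ Filter.limsup
              (fun a => ENNReal.ofReal (1 + δ) * s.sup (fun i => F i a ^ (t a))) Filter.atTop :=
            Filter.limsup_le_limsup hev2
        _ ≤ ENNReal.ofReal (1 + δ) *
              Filter.limsup (fun a => s.sup (fun i => F i a ^ (t a))) Filter.atTop := by
            have hml := ENNReal.limsup_mul_le' (f := (atTop : Filter A))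
              (u := fun _ : A => ENNReal.ofReal (1 + δ))
              (v := fun a => s.sup (fun i => F i a ^ (t a)))
              (by rw [Filter.limsup_const]
                  exact Or.inl (by simp [ENNReal.ofReal_eq_zero]; linarith))
              (by rw [Filter.limsup_const]; exact Or.inl ENNReal.ofReal_ne_top)
            rw [Filter.limsup_const] at hml
            exact hml
        _ ≤ ENNReal.ofReal (1 + δ) * L :=
            mul_le_mul_right (limsup_finset_sup_le s _) _
    refine le_of_nhdsGT ?_ key
    have h1 : Tendsto (fun δ : ℝ => (1:ℝ) + δ) (𝓝[>] (0:ℝ)) (𝓝 1) := by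
      have hcont : Continuous (fun δ : ℝ => (1:ℝ) + δ) := continuous_const.add continuous_id
      have := (hcont.tendsto (0:ℝ)).mono_left (nhdsWithin_le_nhds (s := Set.Ioi (0:ℝ)))
      simpa using this
    have h2 : Tendsto (fun δ : ℝ => ENNReal.ofReal (1 + δ)) (𝓝[>] (0:ℝ)) (𝓝 1) := by
      have := (ENNReal.continuous_ofReal.tendsto (1:ℝ)).comp h1
      simpa [Function.comp_def] using this
    have h3 := ENNReal.Tendsto.mul_const (b := L) h2 (Or.inl one_ne_zero)
    simpa using h3

lemma limsup_add_rpow_le (t : A → ℝ) (hpos : ∀ a, 0 < t a)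
    (hto0 : Tendsto t atTop (𝓝 (0 : ℝ))) (u v : A → ℝ≥0∞) :
    Filter.limsup (fun a => (u a + v a) ^ (t a)) Filter.atTop ≤
      max (Filter.limsup (fun a => u a ^ (t a)) Filter.atTop)
        (Filter.limsup (fun a => v a ^ (t a)) Filter.atTop) := by
  have key := limsup_sum_rpow_le t hpos hto0 (Finset.univ : Finset Bool)
    (fun b a => cond b (u a) (v a))
  have hsum : ∀ a : A, (∑ b : Bool, cond b (u a) (v a)) = u a + v a := by
    intro a; rw [Fintype.sum_bool]; rfl
  have hsup : (Finset.univ : Finset Bool).sup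
      (fun b => Filter.limsup (fun a => (cond b (u a) (v a)) ^ (t a)) Filter.atTop) =
      max (Filter.limsup (fun a => u a ^ (t a)) Filter.atTop)
        (Filter.limsup (fun a => v a ^ (t a)) Filter.atTop) := by
    rw [Fintype.univ_bool, Finset.sup_insert, Finset.sup_singleton]
    rfl
  simp only [hsum, hsup] at key
  exact key

lemma rpow_inv_rpow_cancel {t : A → ℝ} (hpos : ∀ a, 0 < t a) (a : A) (z : ℝ≥0∞) :
    (z ^ (t a)⁻¹) ^ (t a) = z := by
  rw [← ENNReal.rpow_mul, inv_mul_cancel₀ (hpos a).ne', ENNReal.rpow_one]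

lemma exp_integrand_eq {t : A → ℝ} (h : X → EReal) (a : A) (x : X) :
    EReal.exp ((((t a)⁻¹ : ℝ) : EReal) * h x) = (EReal.exp (h x)) ^ ((t a)⁻¹ : ℝ) := by
  rw [mul_comm, EReal.exp_mul]

/-- Upper bound for the integral of the exponential over a set where `h ≤ c`. -/
lemma piece_upper {μ : A → Measure X} {t : A → ℝ} (hpos : ∀ a, 0 < t a)
    {h : X → EReal} (a : A) {c : ℝ} {S : Set X} (hS : ∀ x ∈ S, h x ≤ (c : EReal)) :
    ∫⁻ x in S, EReal.exp ((((t a)⁻¹ : ℝ) : EReal) * h x) ∂(μ a) ≤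
      (EReal.exp (c : EReal)) ^ ((t a)⁻¹ : ℝ) * μ a S := by
  have hmono : ∀ x ∈ S, EReal.exp ((((t a)⁻¹ : ℝ) : EReal) * h x) ≤
      (EReal.exp (c : EReal)) ^ ((t a)⁻¹ : ℝ) := by
    intro x hx
    rw [exp_integrand_eq h a x]
    exact ENNReal.rpow_le_rpow (EReal.exp_le_exp_iff.2 (hS x hx)) (inv_pos.2 (hpos a)).le
  calc ∫⁻ x in S, EReal.exp ((((t a)⁻¹ : ℝ) : EReal) * h x) ∂(μ a)
      ≤ ∫⁻ _ in S, (EReal.exp (c : EReal)) ^ ((t a)⁻¹ : ℝ) ∂(μ a) :=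
        setLIntegral_mono measurable_const hmono
    _ = (EReal.exp (c : EReal)) ^ ((t a)⁻¹ : ℝ) * μ a S := setLIntegral_const _ _

/-- Lower bound for the integral of the exponential over a set where `c ≤ h`. -/
lemma piece_lower {μ : A → Measure X} {t : A → ℝ} (hpos : ∀ a, 0 < t a)
    {h : X → EReal} (a : A) {c : ℝ} {S : Set X} (hSm : MeasurableSet S)
    (hS : ∀ x ∈ S, (c : EReal) ≤ h x) :
    (EReal.exp (c : EReal)) ^ ((t a)⁻¹ : ℝ) * μ a S ≤
      ∫⁻ x in S, EReal.exp ((((t a)⁻¹ : ℝ) : EReal) * h x) ∂(μ a) := by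
  have hmono : ∀ x ∈ S, (EReal.exp (c : EReal)) ^ ((t a)⁻¹ : ℝ) ≤
      EReal.exp ((((t a)⁻¹ : ℝ) : EReal) * h x) := by
    intro x hx
    rw [exp_integrand_eq h a x]
    exact ENNReal.rpow_le_rpow (EReal.exp_le_exp_iff.2 (hS x hx)) (inv_pos.2 (hpos a)).le
  calc (EReal.exp (c : EReal)) ^ ((t a)⁻¹ : ℝ) * μ a S
      = ∫⁻ _ in S, (EReal.exp (c : EReal)) ^ ((t a)⁻¹ : ℝ) ∂(μ a) := (setLIntegral_const _ _).symm
    _ ≤ ∫⁻ x in S, EReal.exp ((((t a)⁻¹ : ℝ) : EReal) * h x) ∂(μ a) :=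
        setLIntegral_mono' hSm hmono

/-- Vague upper bound: compact sets. -/
lemma limsup_compact_le {μ : A → Measure X} {t : A → ℝ} [T2Space X] [LocallyCompactSpace X]
    (hpos : ∀ a, 0 < t a) (hto0 : Tendsto t atTop (𝓝 (0 : ℝ)))
    (hKG : ∀ K G : Set X, IsCompact K → IsOpen G → K ⊆ G →
      Filter.limsup (fun a => μ a K ^ (t a)) Filter.atTop ≤
        Filter.liminf (fun a => μ a G ^ (t a)) Filter.atTop)
    {C : Set X} (hC : IsCompact C) :
    Filter.limsup (fun a => μ a C ^ (t a)) Filter.atTop ≤ ⨆ x ∈ C, Ifn μ t x := by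
  haveI : (atTop : Filter A).NeBot := atTop_nebot
  refine le_of_forall_gt_imp_ge_of_dense fun c hc => ?_
  have hex : ∀ x ∈ C, ∃ D G : Set X, IsCompact D ∧ x ∈ interior D ∧ D ⊆ G ∧ IsOpen G ∧
      Filter.liminf (fun a => μ a G ^ (t a)) Filter.atTop < c := by
    intro x hx
    have hIx : Ifn μ t x < c :=
      lt_of_le_of_lt (le_trans (le_iSup₂ (f := fun y (_ : y ∈ C) => Ifn μ t y) x hx) le_rfl) hc
    rw [Ifn] at hIx
    obtain ⟨G, hG⟩ := iInf_lt_iff.1 hIx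
    obtain ⟨hGopen, hG⟩ := iInf_lt_iff.1 hG
    obtain ⟨hxG, hG⟩ := iInf_lt_iff.1 hG
    obtain ⟨D, hDcpt, hxD, hDG⟩ := exists_compact_subset hGopen hxG
    exact ⟨D, G, hDcpt, hxD, hDG, hGopen, hG⟩
  choose! D G hDcpt hxD hDG hGopen hGlt using hex
  obtain ⟨s, hsC, hcov⟩ := hC.elim_nhds_subcover (fun x => interior (D x))
    (fun x hx => isOpen_interior.mem_nhds (hxD x hx))
  have hmeas : ∀ a, μ a C ≤ ∑ x ∈ s, μ a (D x) := by
    intro a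
    refine le_trans (measure_mono (hcov.trans (Set.iUnion₂_mono fun x _ => interior_subset))) ?_
    exact measure_biUnion_finset_le (μ := μ a) s D
  calc Filter.limsup (fun a => μ a C ^ (t a)) Filter.atTop
      ≤ Filter.limsup (fun a => (∑ x ∈ s, μ a (D x)) ^ (t a)) Filter.atTop :=
        Filter.limsup_le_limsup (Filter.Eventually.of_forall fun a =>
          ENNReal.rpow_le_rpow (hmeas a) (hpos a).le)
    _ ≤ s.sup (fun x => Filter.limsup (fun a => μ a (D x) ^ (t a)) Filter.atTop) :=
        limsup_sum_rpow_le t hpos hto0 s _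
    _ ≤ c := by
        refine Finset.sup_le fun x hx => ?_
        exact le_of_lt (lt_of_le_of_lt
          (hKG (D x) (G x) (hDcpt x (hsC x hx)) (hGopen x (hsC x hx)) (hDG x (hsC x hx)))
          (hGlt x (hsC x hx)))

lemma Ifn_le_one {μ : A → Measure X} {t : A → ℝ} (hpos : ∀ a, 0 < t a)
    (hSub : ∀ a, μ a Set.univ ≤ 1) (x : X) : Ifn μ t x ≤ 1 := by
  haveI : (atTop : Filter A).NeBot := atTop_nebot
  have h1 : Ifn μ t x ≤ Filter.liminf (fun a => μ a Set.univ ^ (t a)) Filter.atTop := by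
    refine le_trans (iInf_le _ Set.univ) ?_
    simp only [isOpen_univ, Set.mem_univ, iInf_pos]
    exact le_rfl
  refine h1.trans ?_
  refine liminf_le_of_le (by isBoundedDefault) ?_
  intro b hb
  obtain ⟨a, ha⟩ := hb.exists
  exact ha.trans (ENNReal.rpow_le_one (hSub a) (hpos a).le)

/-- Varadhan lower bound. -/
lemma lower_bound {μ : A → Measure X} {t : A → ℝ} (hpos : ∀ a, 0 < t a)
    (hSub : ∀ a, μ a Set.univ ≤ 1) {h : X → EReal} (hcont : Continuous h)
    (hTtop : ∀ x, h x ≠ ⊤) (x : X) [BorelSpace X] :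
    EReal.exp (h x) * Ifn μ t x ≤ Filter.liminf (expPow μ t h) Filter.atTop := by
  haveI : (atTop : Filter A).NeBot := atTop_nebot
  rcases eq_or_ne (h x) ⊥ with hbot | hbot
  · simp [hbot]
  · have hne : h x ≠ ⊤ := hTtop x
    set r : ℝ := (h x).toReal with hr
    have hxr : (r : EReal) = h x := EReal.coe_toReal hne hbot
    have hI1 : Ifn μ t x ≤ 1 := Ifn_le_one hpos hSub x
    have key : ∀ c : ℝ, c < r → ENNReal.ofReal (Real.exp c) * Ifn μ t x ≤
        Filter.liminf (expPow μ t h) Filter.atTop := by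
      intro c hc
      set G : Set X := h ⁻¹' (Set.Ioi (c : EReal)) with hGdef
      have hGopen : IsOpen G := isOpen_Ioi.preimage hcont
      have hxG : x ∈ G := by
        simp only [hGdef, Set.mem_preimage, Set.mem_Ioi, ← hxr]
        exact_mod_cast hc
      have hpt : ∀ a, EReal.exp (c : EReal) * (μ a G) ^ (t a) ≤ expPow μ t h a := by
        intro a
        have h1 : (EReal.exp (c : EReal)) ^ ((t a)⁻¹ : ℝ) * μ a G ≤
            ∫⁻ y, EReal.exp ((((t a)⁻¹ : ℝ) : EReal) * h y) ∂(μ a) := by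
          refine le_trans (piece_lower hpos a hGopen.measurableSet ?_)
            (setLIntegral_le_lintegral _ _)
          intro y hy
          exact le_of_lt hy
        have h2 := ENNReal.rpow_le_rpow h1 (hpos a).le
        rw [ENNReal.mul_rpow_of_nonneg _ _ (hpos a).le, rpow_inv_rpow_cancel hpos a] at h2
        exact h2
      have h3 : EReal.exp (c : EReal) * Filter.liminf (fun a => μ a G ^ (t a)) Filter.atTop ≤
          Filter.liminf (expPow μ t h) Filter.atTop := by
        have h4 := ENNReal.le_liminf_mul (f := (atTop : Filter A))
          (u := fun _ : A => EReal.exp (c : EReal)) (v := fun a => μ a G ^ (t a))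
        rw [Filter.liminf_const] at h4
        exact h4.trans (Filter.liminf_le_liminf (Filter.Eventually.of_forall hpt))
      have h5 : Ifn μ t x ≤ Filter.liminf (fun a => μ a G ^ (t a)) Filter.atTop := by
        refine le_trans (iInf_le _ G) ?_
        simp [hGopen, hxG]
      calc ENNReal.ofReal (Real.exp c) * Ifn μ t x
          = EReal.exp (c : EReal) * Ifn μ t x := by rw [EReal.exp_coe]
        _ ≤ EReal.exp (c : EReal) * Filter.liminf (fun a => μ a G ^ (t a)) Filter.atTop :=
            mul_le_mul_right h5 _
        _ ≤ Filter.liminf (expPow μ t h) Filter.atTop := h3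
    have hseq : Tendsto (fun n : ℕ => ENNReal.ofReal (Real.exp (r - ((n : ℝ) + 1)⁻¹)) * Ifn μ t x)
        atTop (𝓝 (ENNReal.ofReal (Real.exp r) * Ifn μ t x)) := by
      have h1 : Tendsto (fun n : ℕ => r - ((n : ℝ) + 1)⁻¹) atTop (𝓝 r) := by
        have h0 := tendsto_one_div_add_atTop_nhds_zero_nat (𝕜 := ℝ)
        have h2 := (tendsto_const_nhds (α := ℕ) (x := r) (f := (atTop : Filter ℕ))).sub h0
        simp only [sub_zero] at h2
        refine h2.congr fun n => ?_
        rw [one_div]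
      have h2 := (ENNReal.continuous_ofReal.tendsto _).comp ((Real.continuous_exp.tendsto r).comp h1)
      exact ENNReal.Tendsto.mul_const h2 (Or.inr (hI1.trans_lt ENNReal.one_lt_top).ne)
    have hfinal : ENNReal.ofReal (Real.exp r) * Ifn μ t x ≤
        Filter.liminf (expPow μ t h) Filter.atTop := by
      refine le_of_tendsto hseq (Filter.Eventually.of_forall fun n => ?_)
      refine key _ ?_
      have : (0:ℝ) < ((n : ℝ) + 1)⁻¹ := by positivity
      linarith
    rw [← hxr, EReal.exp_coe]
    exact hfinal

/-- Varadhan upper bound, quantitative version. -/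
lemma upper_est {μ : A → Measure X} {t : A → ℝ} [T2Space X] [LocallyCompactSpace X] [BorelSpace X]
    (hpos : ∀ a, 0 < t a) (hto0 : Tendsto t atTop (𝓝 (0 : ℝ)))
    (hSub : ∀ a, μ a Set.univ ≤ 1)
    (hKG : ∀ K G : Set X, IsCompact K → IsOpen G → K ⊆ G →
      Filter.limsup (fun a => μ a K ^ (t a)) Filter.atTop ≤
        Filter.liminf (fun a => μ a G ^ (t a)) Filter.atTop)
    {h : X → EReal} (hcont : Continuous h) (hTtop : ∀ x, h x ≠ ⊤)
    {m M δ : ℝ} (hMm : m ≤ M) (hδ : 0 < δ) (hδ1 : δ ≤ 1)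
    {K : Set X} (hK : IsCompact K)
    (tail : Filter.limsup (fun a =>
        (∫⁻ x in {x | (M : EReal) < h x}, EReal.exp ((((t a)⁻¹ : ℝ) : EReal) * h x) ∂(μ a))
          ^ (t a)) Filter.atTop ≤ ENNReal.ofReal (Real.exp m))
    (tight : Filter.limsup (fun a => μ a Kᶜ ^ (t a)) Filter.atTop ≤
      ENNReal.ofReal (Real.exp (m - (M + 1)))) :
    Filter.limsup (expPow μ t h) Filter.atTop ≤
      max (ENNReal.ofReal (Real.exp m))
        (ENNReal.ofReal (Real.exp δ) *
          ⨆ x ∈ K ∩ {x : X | (m : EReal) ≤ h x ∧ h x ≤ (M : EReal)},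
            EReal.exp (h x) * Ifn μ t x) := by
  haveI : (atTop : Filter A).NeBot := atTop_nebot
  classical
  set em : ℝ≥0∞ := ENNReal.ofReal (Real.exp m) with hem
  set Kset : Set X := K ∩ {x : X | (m : EReal) ≤ h x ∧ h x ≤ (M : EReal)} with hKset
  set S : ℝ≥0∞ := ⨆ x ∈ Kset, EReal.exp (h x) * Ifn μ t x with hSdef
  set n : ℕ := ⌈(M - m) / δ⌉₊ with hn
  set cs : ℕ → ℝ := fun j => m + j * δ with hcs
  set ds : ℕ → ℝ := fun j => min (m + (j + 1) * δ) M with hds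
  set B : ℕ → Set X := fun j => h ⁻¹' (Set.Icc ((cs j : ℝ) : EReal) ((ds j : ℝ) : EReal)) with hBdef
  set Seq : ℕ → Set X := fun k =>
    if k = 0 then {x : X | (M : EReal) < h x}
    else if k = 1 then {x : X | h x ≤ (m : EReal)}
    else if k - 2 < n then B (k - 2) else ∅ with hSeq
  -- coverage
  have hcover : (⋃ k, Seq k) = Set.univ := by
    refine Set.eq_univ_of_forall fun x => Set.mem_iUnion.2 ?_
    by_cases h1 : h x ≤ (m : EReal)
    · exact ⟨1, by simp [hSeq, h1]⟩
    by_cases h2 : (M : EReal) < h x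
    · exact ⟨0, by simp [hSeq, h2]⟩
    push_neg at h1 h2
    have hxbot : h x ≠ ⊥ := fun hb => by simp [hb] at h1
    set r : ℝ := (h x).toReal with hr
    have hxr : (r : EReal) = h x := EReal.coe_toReal (hTtop x) hxbot
    have hmr : m < r := by rw [← hxr] at h1; exact_mod_cast h1
    have hrM : r ≤ M := by rw [← hxr] at h2; exact_mod_cast h2
    set q : ℝ := (r - m) / δ with hq
    have hqpos : 0 < q := div_pos (by linarith) hδ
    have hceil1 : 1 ≤ ⌈q⌉₊ := Nat.one_le_ceil_iff.2 hqpos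
    set j : ℕ := ⌈q⌉₊ - 1 with hj
    have hj1 : j + 1 = ⌈q⌉₊ := by omega
    have hjn : j < n := by
      have h3 : ⌈q⌉₊ ≤ n := by
        refine Nat.ceil_le_ceil ?_
        exact div_le_div_of_nonneg_right (by linarith) hδ.le
      omega
    have hjq : (j : ℝ) < q := Nat.lt_ceil.1 (by omega)
    have hqj : q ≤ (j : ℝ) + 1 := by
      have := Nat.le_ceil q
      rw [← hj1] at this
      exact_mod_cast this
    have hrq : r = m + q * δ := by rw [hq, div_mul_cancel₀ _ hδ.ne']; ring
    have hc_le : cs j ≤ r := by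
      have : (j : ℝ) * δ < q * δ := by nlinarith
      simp only [hcs]; nlinarith
    have hr_le : r ≤ ds j := by
      refine le_min ?_ hrM
      have : q * δ ≤ ((j : ℝ) + 1) * δ := by nlinarith
      nlinarith
    refine ⟨j + 2, ?_⟩
    have hj2 : (j + 2) - 2 = j := by omega
    simp only [hSeq, hj2, if_neg (by omega : ¬ j + 2 = 0), if_neg (by omega : ¬ j + 2 = 1),
      if_pos hjn, hBdef]
    rw [Set.mem_preimage, Set.mem_Icc, ← hxr]
    exact ⟨by exact_mod_cast hc_le, by exact_mod_cast hr_le⟩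
  -- split the integral
  have hsplit : ∀ a : A, (∫⁻ x, EReal.exp ((((t a)⁻¹ : ℝ) : EReal) * h x) ∂(μ a)) ≤
      ∑ k ∈ Finset.range (n + 2),
        ∫⁻ x in Seq k, EReal.exp ((((t a)⁻¹ : ℝ) : EReal) * h x) ∂(μ a) := by
    intro a
    have h1 : (∫⁻ x, EReal.exp ((((t a)⁻¹ : ℝ) : EReal) * h x) ∂(μ a)) =
        ∫⁻ x in ⋃ k, Seq k, EReal.exp ((((t a)⁻¹ : ℝ) : EReal) * h x) ∂(μ a) := by
      rw [hcover, Measure.restrict_univ]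
    rw [h1]
    refine le_trans (lintegral_iUnion_le _ _) ?_
    rw [tsum_eq_sum (s := Finset.range (n + 2)) ?_]
    intro k hk
    have hke : Seq k = ∅ := by
      simp only [Finset.mem_range, not_lt] at hk
      simp only [hSeq, if_neg (by omega : ¬ k = 0), if_neg (by omega : ¬ k = 1),
        if_neg (by omega : ¬ k - 2 < n)]
    rw [hke, Measure.restrict_empty, lintegral_zero_measure]
  -- the majorant functions
  set F : ℕ → A → ℝ≥0∞ := fun k a =>
    if k = 0 then
      ∫⁻ x in {x : X | (M : EReal) < h x}, EReal.exp ((((t a)⁻¹ : ℝ) : EReal) * h x) ∂(μ a)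
    else if k = 1 then (EReal.exp (m : EReal)) ^ ((t a)⁻¹ : ℝ)
    else (EReal.exp ((ds (k - 2) : ℝ) : EReal)) ^ ((t a)⁻¹ : ℝ) *
      (μ a (B (k - 2) ∩ K) + μ a Kᶜ) with hF
  have hFb : ∀ a : A, ∀ k ∈ Finset.range (n + 2),
      (∫⁻ x in Seq k, EReal.exp ((((t a)⁻¹ : ℝ) : EReal) * h x) ∂(μ a)) ≤ F k a := by
    intro a k _
    match k with
    | 0 => simp only [hSeq, hF, if_pos rfl]; exact le_rfl
    | 1 =>
      simp only [hSeq, hF]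
      norm_num
      refine le_trans (piece_upper hpos a (fun x hx => hx)) ?_
      calc (EReal.exp (m : EReal)) ^ ((t a)⁻¹ : ℝ) * μ a {x : X | h x ≤ (m : EReal)}
          ≤ (EReal.exp (m : EReal)) ^ ((t a)⁻¹ : ℝ) * 1 :=
            mul_le_mul_right (le_trans (measure_mono (Set.subset_univ _)) (hSub a)) _
        _ = (EReal.exp (m : EReal)) ^ ((t a)⁻¹ : ℝ) := mul_one _
    | (j+2) =>
      simp only [hSeq, hF, if_neg (by omega : ¬ j + 2 = 0), if_neg (by omega : ¬ j + 2 = 1),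
        Nat.add_sub_cancel]
      by_cases hjn : j < n
      · rw [if_pos hjn]
        refine le_trans
          (piece_upper hpos a (c := ds j) (fun x hx => (Set.mem_Icc.1 hx).2)) ?_
        refine mul_le_mul_right ?_ _
        have hsplit2 := measure_inter_add_diff (μ := μ a) (B j) hK.isClosed.measurableSet
        rw [← hsplit2]
        exact add_le_add le_rfl (measure_mono fun y (hy : y ∈ B j \ K) => hy.2)
      · rw [if_neg hjn]
        simp [Measure.restrict_empty]
  have hmain : ∀ a : A, expPow μ t h a ≤ (∑ k ∈ Finset.range (n + 2), F k a) ^ (t a) := by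
    intro a
    exact ENNReal.rpow_le_rpow ((hsplit a).trans (Finset.sum_le_sum (hFb a))) (hpos a).le
  have h1 : Filter.limsup (expPow μ t h) Filter.atTop ≤
      (Finset.range (n + 2)).sup
        (fun k => Filter.limsup (fun a => F k a ^ (t a)) Filter.atTop) :=
    (Filter.limsup_le_limsup (Filter.Eventually.of_forall hmain)).trans
      (limsup_sum_rpow_le t hpos hto0 _ F)
  refine h1.trans (Finset.sup_le fun k hk => ?_)
  -- bound each term
  have hexp_ne_zero : ∀ c : ℝ, EReal.exp ((c : ℝ) : EReal) ≠ 0 := by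
    intro c; simp [EReal.exp_coe, Real.exp_pos, ENNReal.ofReal_eq_zero, not_le]
  have hexp_ne_top : ∀ c : ℝ, EReal.exp ((c : ℝ) : EReal) ≠ ⊤ := by
    intro c; simp [EReal.exp_coe]
  match k with
  | 0 =>
    refine le_trans ?_ (le_max_left _ _)
    simp only [hF, if_pos rfl]
    exact tail
  | 1 =>
    refine le_trans ?_ (le_max_left _ _)
    have hfun : (fun a => F 1 a ^ t a) = fun _ : A => EReal.exp (m : EReal) := by
      funext a
      simp only [hF]
      norm_num
      exact Or.inl (hpos a).ne'
    rw [hfun, Filter.limsup_const, EReal.exp_coe]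
  | (j+2) =>
    have hjn : j < n := by
      simp only [Finset.mem_range] at hk; omega
    simp only [hF, if_neg (by omega : ¬ j + 2 = 0), if_neg (by omega : ¬ j + 2 = 1),
      Nat.add_sub_cancel]
    have heq : ∀ a : A, ((EReal.exp ((ds j : ℝ) : EReal)) ^ ((t a)⁻¹ : ℝ) *
        (μ a (B j ∩ K) + μ a Kᶜ)) ^ (t a) =
        EReal.exp ((ds j : ℝ) : EReal) * (μ a (B j ∩ K) + μ a Kᶜ) ^ (t a) := by
      intro a
      rw [ENNReal.mul_rpow_of_nonneg _ _ (hpos a).le, rpow_inv_rpow_cancel hpos a]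
    simp only [heq]
    have h2 : Filter.limsup
        (fun a => EReal.exp ((ds j : ℝ) : EReal) * (μ a (B j ∩ K) + μ a Kᶜ) ^ (t a))
        Filter.atTop ≤ EReal.exp ((ds j : ℝ) : EReal) *
          Filter.limsup (fun a => (μ a (B j ∩ K) + μ a Kᶜ) ^ (t a)) Filter.atTop := by
      have hml := ENNReal.limsup_mul_le' (f := (atTop : Filter A))
        (u := fun _ : A => EReal.exp ((ds j : ℝ) : EReal))
        (v := fun a => (μ a (B j ∩ K) + μ a Kᶜ) ^ (t a))
        (by rw [Filter.limsup_const]; exact Or.inl (hexp_ne_zero _))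
        (by rw [Filter.limsup_const]; exact Or.inl (hexp_ne_top _))
      rw [Filter.limsup_const] at hml
      exact hml
    refine h2.trans ?_
    have h3 := limsup_add_rpow_le t hpos hto0 (fun a => μ a (B j ∩ K)) (fun a => μ a Kᶜ)
    refine (mul_le_mul_right h3 _).trans ?_
    rw [mul_max]
    have hBclosed : IsClosed (B j) := (isClosed_Icc).preimage hcont
    have hBK : IsCompact (B j ∩ K) := hK.inter_left hBclosed
    -- first branch
    have hbr1 : EReal.exp ((ds j : ℝ) : EReal) *
        Filter.limsup (fun a => μ a (B j ∩ K) ^ (t a)) Filter.atTop ≤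
        ENNReal.ofReal (Real.exp δ) * S := by
      refine le_trans (mul_le_mul_right (limsup_compact_le hpos hto0 hKG hBK) _) ?_
      rw [ENNReal.mul_iSup]
      refine iSup_le fun x => ?_
      rw [ENNReal.mul_iSup]
      refine iSup_le fun hx => ?_
      obtain ⟨hxB, hxK⟩ := hx
      obtain ⟨hcj, hdj⟩ := Set.mem_Icc.1 hxB
      have hmcs : m ≤ cs j := by
        have hj0 : (0:ℝ) ≤ (j:ℝ) * δ := mul_nonneg (Nat.cast_nonneg j) hδ.le
        simp only [hcs]; linarith
      have hdsM : ds j ≤ M := min_le_right _ _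
      have hxKset : x ∈ Kset := by
        refine ⟨hxK, ?_, ?_⟩
        · exact le_trans (by exact_mod_cast hmcs) hcj
        · exact hdj.trans (by exact_mod_cast hdsM)
      have hstep : EReal.exp ((ds j : ℝ) : EReal) ≤
          ENNReal.ofReal (Real.exp δ) * EReal.exp (h x) := by
        have hds_le : ds j ≤ cs j + δ := by
          refine le_trans (min_le_left _ _) (le_of_eq ?_)
          simp only [hcs]; ring
        calc EReal.exp ((ds j : ℝ) : EReal) ≤ EReal.exp ((cs j + δ : ℝ) : EReal) :=
              EReal.exp_le_exp_iff.2 (by exact_mod_cast hds_le)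
          _ = ENNReal.ofReal (Real.exp (cs j + δ)) := EReal.exp_coe _
          _ = ENNReal.ofReal (Real.exp δ * Real.exp (cs j)) := by
              rw [← Real.exp_add]; ring_nf
          _ = ENNReal.ofReal (Real.exp δ) * ENNReal.ofReal (Real.exp (cs j)) :=
              ENNReal.ofReal_mul (Real.exp_pos δ).le
          _ = ENNReal.ofReal (Real.exp δ) * EReal.exp ((cs j : ℝ) : EReal) := by
              rw [EReal.exp_coe]
          _ ≤ ENNReal.ofReal (Real.exp δ) * EReal.exp (h x) :=
              mul_le_mul_right (EReal.exp_le_exp_iff.2 hcj) _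
      calc EReal.exp ((ds j : ℝ) : EReal) * Ifn μ t x
          ≤ (ENNReal.ofReal (Real.exp δ) * EReal.exp (h x)) * Ifn μ t x :=
            mul_le_mul_left hstep _
        _ = ENNReal.ofReal (Real.exp δ) * (EReal.exp (h x) * Ifn μ t x) := by
            rw [mul_assoc]
        _ ≤ ENNReal.ofReal (Real.exp δ) * S := by
            refine mul_le_mul_right ?_ _
            exact le_iSup₂ (f := fun y (_ : y ∈ Kset) => EReal.exp (h y) * Ifn μ t y) x hxKset
    -- second branch
    have hbr2 : EReal.exp ((ds j : ℝ) : EReal) *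
        Filter.limsup (fun a => μ a Kᶜ ^ (t a)) Filter.atTop ≤ em := by
      calc EReal.exp ((ds j : ℝ) : EReal) *
          Filter.limsup (fun a => μ a Kᶜ ^ (t a)) Filter.atTop
          ≤ ENNReal.ofReal (Real.exp M) * ENNReal.ofReal (Real.exp (m - (M + 1))) := by
            refine mul_le_mul ?_ tight zero_le zero_le
            rw [EReal.exp_coe]
            exact ENNReal.ofReal_le_ofReal (Real.exp_le_exp.2 (min_le_right _ _))
        _ = ENNReal.ofReal (Real.exp M * Real.exp (m - (M + 1))) :=
            (ENNReal.ofReal_mul (Real.exp_pos M).le).symm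
        _ = ENNReal.ofReal (Real.exp (m - 1)) := by rw [← Real.exp_add]; ring_nf
        _ ≤ em := ENNReal.ofReal_le_ofReal (Real.exp_le_exp.2 (by linarith))
    exact max_le (hbr1.trans (le_max_right _ _)) (hbr2.trans (le_max_left _ _))

lemma log_iSup' {ι : Sort*} (g : ι → ℝ≥0∞) :
    ENNReal.log (⨆ i, g i) = ⨆ i, ENNReal.log (g i) := by
  rw [← ENNReal.logOrderIso_apply, map_iSup ENNReal.logOrderIso g]
  simp

lemma log_exp_mul_Ifn (μ : A → Measure X) (t : A → ℝ) (h : X → EReal) (x : X) :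
    ENNReal.log (EReal.exp (h x) * Ifn μ t x) = h x - lOne μ t x := by
  rw [ENNReal.log_mul_add, EReal.log_exp, lOne_eq, sub_eq_add_neg, neg_neg]

end AuxLDP

/-- Theorem (compact case), part (b). -/
theorem statement1
    {X : Type*} [TopologicalSpace X] [T2Space X] [LocallyCompactSpace X]
    [MeasurableSpace X] [BorelSpace X]
    {A : Type*} [Preorder A] [IsDirected A (· ≤ ·)] [Nonempty A]
    (μ : A → Measure X) (t : A → ℝ)
    (hRadon : ∀ a, (μ a).InnerRegular) (hSub : ∀ a, μ a Set.univ ≤ 1)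
    (hpos : ∀ a, 0 < t a) (hto0 : Tendsto t atTop (𝓝 (0 : ℝ)))
    (T : Set (X → EReal))
    (hTcont : ∀ h ∈ T, Continuous h) (hTtop : ∀ h ∈ T, ∀ x, h x ≠ ⊤)
    -- (i) the tail condition
    (hTail : TailCondition μ t T)
    -- (ii) comparison of compact and open asymptotic measures
    (hKG : ∀ K G : Set X, IsCompact K → IsOpen G → K ⊆ G →
      Filter.limsup (fun a => μ a K ^ (t a)) Filter.atTop ≤
        Filter.liminf (fun a => μ a G ^ (t a)) Filter.atTop)
    -- (iii) uniform lower bound on Λ̄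
    (m : ℝ) (hm : ∀ h ∈ T, (m : EReal) < LambdaBar μ t h)
    -- exponential tightness
    (hET : ExpTight μ t) :
    (∀ h ∈ T, LambdaExists μ t h) ∧
    ∃ M : ℝ, ∃ K : Set X, IsCompact K ∧ ∀ h ∈ T,
      LambdaBar μ t h =
        (⨆ x ∈ K ∩ {x : X | (m : EReal) ≤ h x ∧ h x ≤ (M : EReal)}, (h x - lOne μ t x)) ∧
      LambdaBar μ t h = ⨆ x : X, (h x - lOne μ t x) := by
  haveI : (atTop : Filter A).NeBot := atTop_nebot
  classical
  obtain ⟨M0, hM0⟩ := hTail (Real.exp m) (Real.exp_pos m)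
  set M : ℝ := max M0 m with hMdef
  obtain ⟨K, hKcpt, hKtight⟩ := hET (Real.exp (m - (M + 1))) (Real.exp_pos _)
  have htail' : ∀ h ∈ T, Filter.limsup (fun a =>
      (∫⁻ x in {x : X | (M : EReal) < h x},
          EReal.exp ((((t a)⁻¹ : ℝ) : EReal) * h x) ∂(μ a)) ^ (t a)) Filter.atTop ≤
      ENNReal.ofReal (Real.exp m) := by
    intro h hT
    refine le_trans (Filter.limsup_le_limsup (Filter.Eventually.of_forall fun a => ?_))
      (hM0 h hT).le
    refine ENNReal.rpow_le_rpow ?_ (hpos a).le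
    refine lintegral_mono_set fun x hx => ?_
    have hx' : (M : EReal) < h x := hx
    exact lt_of_le_of_lt (show (M0 : EReal) ≤ (M : EReal) by exact_mod_cast le_max_left M0 m) hx' 
  have key : ∀ h ∈ T,
      Filter.liminf (expPow μ t h) Filter.atTop = Filter.limsup (expPow μ t h) Filter.atTop ∧
      Filter.limsup (expPow μ t h) Filter.atTop =
        (⨆ x ∈ K ∩ {x : X | (m : EReal) ≤ h x ∧ h x ≤ (M : EReal)},
          EReal.exp (h x) * Ifn μ t x) ∧
      Filter.limsup (expPow μ t h) Filter.atTop = ⨆ x : X, EReal.exp (h x) * Ifn μ t x := by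
    intro h hT
    have hlow : (⨆ x : X, EReal.exp (h x) * Ifn μ t x) ≤
        Filter.liminf (expPow μ t h) Filter.atTop :=
      iSup_le fun x => lower_bound hpos hSub (hTcont h hT) (hTtop h hT) x
    have hup0 : ∀ δ : ℝ, 0 < δ → δ ≤ 1 →
        Filter.limsup (expPow μ t h) Filter.atTop ≤
          max (ENNReal.ofReal (Real.exp m)) (ENNReal.ofReal (Real.exp δ) *
            ⨆ x ∈ K ∩ {x : X | (m : EReal) ≤ h x ∧ h x ≤ (M : EReal)},
              EReal.exp (h x) * Ifn μ t x) :=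
      fun δ h1 h2 => upper_est hpos hto0 hSub hKG (hTcont h hT) (hTtop h hT)
        (le_max_right M0 m) h1 h2 hKcpt (htail' h hT) hKtight.le
    have hSle : (⨆ x ∈ K ∩ {x : X | (m : EReal) ≤ h x ∧ h x ≤ (M : EReal)},
        EReal.exp (h x) * Ifn μ t x) ≤ ENNReal.ofReal (Real.exp M) := by
      refine iSup₂_le fun x hx => ?_
      calc EReal.exp (h x) * Ifn μ t x ≤ EReal.exp ((M : ℝ) : EReal) * 1 :=
            mul_le_mul (EReal.exp_le_exp_iff.2 hx.2.2) (Ifn_le_one hpos hSub x)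
              zero_le zero_le
        _ = ENNReal.ofReal (Real.exp M) := by rw [mul_one, EReal.exp_coe]
    have hS_fin : (⨆ x ∈ K ∩ {x : X | (m : EReal) ≤ h x ∧ h x ≤ (M : EReal)},
        EReal.exp (h x) * Ifn μ t x) ≠ ⊤ :=
      ne_top_of_le_ne_top ENNReal.ofReal_ne_top hSle
    have hup : Filter.limsup (expPow μ t h) Filter.atTop ≤
        max (ENNReal.ofReal (Real.exp m))
          (⨆ x ∈ K ∩ {x : X | (m : EReal) ≤ h x ∧ h x ≤ (M : EReal)},
            EReal.exp (h x) * Ifn μ t x) := by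
      refine le_of_nhdsGT ?_ hup0
      have h1 : Tendsto (fun δ : ℝ => ENNReal.ofReal (Real.exp δ)) (𝓝[>] (0:ℝ)) (𝓝 1) := by
        have h2 := (ENNReal.continuous_ofReal.tendsto _).comp (Real.continuous_exp.tendsto 0)
        simp only [Function.comp_def, Real.exp_zero, ENNReal.ofReal_one] at h2
        exact h2.mono_left nhdsWithin_le_nhds
      have h2 := ENNReal.Tendsto.mul_const (b := ⨆ x ∈ K ∩ {x : X | (m : EReal) ≤ h x ∧
          h x ≤ (M : EReal)}, EReal.exp (h x) * Ifn μ t x) h1 (Or.inl one_ne_zero)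
      rw [one_mul] at h2
      exact tendsto_const_nhds.max h2
    have hemlt : ENNReal.ofReal (Real.exp m) < Filter.limsup (expPow μ t h) Filter.atTop := by
      have h0 := hm h hT
      rw [LambdaBar] at h0
      have h2 := EReal.exp_lt_exp_iff.2 h0
      rw [ENNReal.exp_log, EReal.exp_coe] at h2
      exact h2
    have hPS : Filter.limsup (expPow μ t h) Filter.atTop ≤
        ⨆ x ∈ K ∩ {x : X | (m : EReal) ≤ h x ∧ h x ≤ (M : EReal)},
          EReal.exp (h x) * Ifn μ t x := by
      rcases max_cases (ENNReal.ofReal (Real.exp m))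
        (⨆ x ∈ K ∩ {x : X | (m : EReal) ≤ h x ∧ h x ≤ (M : EReal)},
          EReal.exp (h x) * Ifn μ t x) with ⟨hmax, _⟩ | ⟨hmax, _⟩
      · rw [hmax] at hup
        exact ((hup.trans_lt hemlt).ne rfl).elim
      · rw [hmax] at hup
        exact hup
    have hSSx : (⨆ x ∈ K ∩ {x : X | (m : EReal) ≤ h x ∧ h x ≤ (M : EReal)},
        EReal.exp (h x) * Ifn μ t x) ≤ ⨆ x : X, EReal.exp (h x) * Ifn μ t x :=
      iSup₂_le fun x _ => le_iSup (fun y => EReal.exp (h y) * Ifn μ t y) x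
    have hils : Filter.liminf (expPow μ t h) Filter.atTop ≤
        Filter.limsup (expPow μ t h) Filter.atTop := liminf_le_limsup
    refine ⟨le_antisymm hils (hPS.trans (hSSx.trans hlow)), ?_, ?_⟩
    · exact le_antisymm hPS ((hSSx.trans hlow).trans hils)
    · exact le_antisymm (hPS.trans hSSx) (hlow.trans hils)
  constructor
  · intro h hT
    exact congrArg ENNReal.log (key h hT).1
  · refine ⟨M, K, hKcpt, fun h hT => ?_⟩
    obtain ⟨e1, e2, e3⟩ := key h hT
    have hcongr1 : (⨆ x ∈ K ∩ {x : X | (m : EReal) ≤ h x ∧ h x ≤ (M : EReal)},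
        (h x - lOne μ t x)) = ⨆ x ∈ K ∩ {x : X | (m : EReal) ≤ h x ∧ h x ≤ (M : EReal)},
          ENNReal.log (EReal.exp (h x) * Ifn μ t x) := by
      refine iSup_congr fun x => ?_
      refine iSup_congr fun _ => ?_
      rw [log_exp_mul_Ifn]
    have hcongr2 : (⨆ x : X, (h x - lOne μ t x)) =
        ⨆ x : X, ENNReal.log (EReal.exp (h x) * Ifn μ t x) := by
      refine iSup_congr fun x => ?_
      rw [log_exp_mul_Ifn]
    constructor
    · rw [LambdaBar, e2, hcongr1, log_iSup']
      exact iSup_congr fun x => log_iSup' _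
    · rw [LambdaBar, e3, hcongr2, log_iSup']

end
end

section
/- Assume that L(λ) exists and is finite for all λ in a nonempty open interval G ⊂ ℝ. Then the net (μ_α^{t_α}) has a subnet (μ_γ^{t_γ}) such that for every λ₀ ∈ G: l_1^{(γ)}((L|_G)'_-(λ₀)) ≤ λ₀·(L|_G)'_-(λ₀) − L(λ₀) and l_1^{(γ)}((L|_G)'_+(λ₀)) ≤ λ₀·(L|_G)'_+(λ₀) − L(λ₀), where l_1^{(γ)} denotes the function l_1 computed along the subnet (μ_γ^{t_γ}). Consequently l_1^{(γ)}(x) ≤ L|_G*(x) for all x ∈ ran (L|_G)'_- ∪ ran (L|_G)'_+. -/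
open Filter MeasureTheory Topology Set
open scoped ENNReal NNReal

noncomputable section

variable {X : Type*} [TopologicalSpace X] [MeasurableSpace X]
variable {A : Type*} [Preorder A]

/-- `l₁` along the net determined by the filter `F` on the index set. -/
noncomputable def lOneF {X : Type*} [TopologicalSpace X] [MeasurableSpace X]
    {B : Type*} (μ : B → Measure X) (t : B → ℝ) (F : Filter B) (x : X) : EReal :=
  - ENNReal.log (⨅ (G : Set X) (_ : IsOpen G) (_ : x ∈ G),
      Filter.liminf (fun b => μ b G ^ (t b)) F)

/-- The canonical (atTop-like) filter associated with a directed relation `r`. -/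
def netFilter {B : Type*} (r : B → B → Prop) : Filter B :=
  ⨅ b : B, Filter.principal {b' | r b b'}

universe u v

section AuxLDP

/-- `e^c` as an `ℝ≥0∞`. -/
noncomputable def expR (c : ℝ) : ℝ≥0∞ := ENNReal.ofReal (Real.exp c)

lemma expR_mul (a b : ℝ) : expR a * expR b = expR (a + b) := by
  rw [expR, expR, expR, ← ENNReal.ofReal_mul (Real.exp_pos a).le, ← Real.exp_add]

lemma expR_rpow (a s : ℝ) : expR a ^ s = expR (a * s) := by
  rw [expR, ENNReal.ofReal_rpow_of_pos (Real.exp_pos a), expR]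
  congr 1
  rw [Real.rpow_def_of_pos (Real.exp_pos a), Real.log_exp]

lemma expR_le {a b : ℝ} (h : a ≤ b) : expR a ≤ expR b :=
  ENNReal.ofReal_le_ofReal (Real.exp_le_exp.2 h)

lemma expR_lt {a b : ℝ} (h : a < b) : expR a < expR b :=
  (ENNReal.ofReal_lt_ofReal_iff (Real.exp_pos b)).2 (Real.exp_lt_exp.2 h)

lemma expR_ne_top (a : ℝ) : expR a ≠ ∞ := ENNReal.ofReal_ne_top

lemma expR_lt_top (a : ℝ) : expR a < ∞ := ENNReal.ofReal_lt_top

lemma expR_zero : expR 0 = 1 := by simp [expR]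

lemma log_expR (c : ℝ) : ENNReal.log (expR c) = (c : EReal) := by
  rw [expR, ENNReal.log_ofReal_of_pos (Real.exp_pos c), Real.log_exp]


section MID

variable {A : Type*} [Preorder A] [Nonempty A] [IsDirected A (· ≤ ·)]

/-- One-sided tail estimate: the `l1`-integral over a set where
`(l1 - l') * x ≤ c'` is controlled by the `l'`-integral. -/
lemma tail_bound (μ : A → Measure ℝ) (t : A → ℝ)
    (l1 l' c' : ℝ) (S : Set ℝ) (hms : MeasurableSet S)
    (hpt : ∀ x ∈ S, (l1 - l') * x ≤ c') (a : A) (hta : 0 < t a) :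
    (∫⁻ x in S, expR (l1 * x / t a) ∂(μ a)) ^ (t a)
      ≤ expR c' * (∫⁻ x, expR (l' * x / t a) ∂(μ a)) ^ (t a) := by
  have step1 : (∫⁻ x in S, expR (l1 * x / t a) ∂(μ a))
      ≤ expR (c' / t a) * ∫⁻ x, expR (l' * x / t a) ∂(μ a) := by
    calc ∫⁻ x in S, expR (l1 * x / t a) ∂(μ a)
        ≤ ∫⁻ x in S, expR (c' / t a) * expR (l' * x / t a) ∂(μ a) := by
          refine setLIntegral_mono' hms fun x hx => ?_
          rw [expR_mul]
          refine expR_le ?_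
          have h1 : (l1 - l') * x ≤ c' := hpt x hx
          have h2 : l1 * x = (l1 - l') * x + l' * x := by ring
          rw [h2, add_div]
          exact add_le_add_left ((div_le_div_iff_of_pos_right hta).2 h1) _
      _ = expR (c' / t a) * ∫⁻ x in S, expR (l' * x / t a) ∂(μ a) :=
          lintegral_const_mul' _ _ (expR_ne_top _)
      _ ≤ expR (c' / t a) * ∫⁻ x, expR (l' * x / t a) ∂(μ a) := by
          gcongr
          exact Measure.restrict_le_self
  calc (∫⁻ x in S, expR (l1 * x / t a) ∂(μ a)) ^ (t a)
      ≤ (expR (c' / t a) * ∫⁻ x, expR (l' * x / t a) ∂(μ a)) ^ (t a) :=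
        ENNReal.rpow_le_rpow step1 hta.le
    _ = (expR (c' / t a)) ^ (t a) * (∫⁻ x, expR (l' * x / t a) ∂(μ a)) ^ (t a) :=
        ENNReal.mul_rpow_of_nonneg _ _ hta.le
    _ = expR c' * (∫⁻ x, expR (l' * x / t a) ∂(μ a)) ^ (t a) := by
        rw [expR_rpow, div_mul_cancel₀ _ hta.ne']

/-- The middle-interval lower bound. -/
lemma mid_bound (μ : A → Measure ℝ) (t : A → ℝ) (hpos : ∀ a, 0 < t a)
    (hto0 : Tendsto t atTop (𝓝 (0 : ℝ)))
    (la l1 lb cla c1 clb : ℝ)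
    (hTa : Tendsto (fun a => (∫⁻ x, expR (la * x / t a) ∂(μ a)) ^ (t a)) atTop (𝓝 (expR cla)))
    (hT1 : Tendsto (fun a => (∫⁻ x, expR (l1 * x / t a) ∂(μ a)) ^ (t a)) atTop (𝓝 (expR c1)))
    (hTb : Tendsto (fun a => (∫⁻ x, expR (lb * x / t a) ∂(μ a)) ^ (t a)) atTop (𝓝 (expR clb)))
    (d δ ρ m : ℝ) (hδ : 0 < δ) (hρ : 0 < ρ)
    (hab1 : la ≤ l1) (h1b : l1 ≤ lb)
    (gl : (l1 - la) * (d - δ) + cla ≤ c1 - ρ)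
    (gr : (l1 - lb) * (d + δ) + clb ≤ c1 - ρ)
    (hm : ∀ x ∈ Set.Ioo (d - δ) (d + δ), l1 * x ≤ m)
    (ε' : ℝ) (hε' : 0 < ε') :
    expR (c1 - m - ε') ≤ liminf (fun a => μ a (Set.Ioo (d - δ) (d + δ)) ^ (t a)) atTop := by
  haveI : (atTop : Filter A).NeBot := atTop_neBot_iff.mpr ⟨inferInstance, inferInstance⟩
  set S := Set.Ioo (d - δ) (d + δ) with hS
  set e := min ε' (ρ / 4) with he
  have he0 : 0 < e := lt_min hε' (by linarith)
  have heρ : e ≤ ρ / 4 := min_le_right _ _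
  have hee : e ≤ ε' := min_le_left _ _
  have hmono : expR (c1 - m - ε') ≤ expR (c1 - m - e) := expR_le (by linarith)
  refine hmono.trans ?_
  set Z1 : A → ℝ≥0∞ := fun a => ∫⁻ x, expR (l1 * x / t a) ∂(μ a) with hZ1
  set Il : A → ℝ≥0∞ := fun a => ∫⁻ x in Set.Iic (d - δ), expR (l1 * x / t a) ∂(μ a) with hIl
  set Im : A → ℝ≥0∞ := fun a => ∫⁻ x in S, expR (l1 * x / t a) ∂(μ a) with hIm
  set Ir : A → ℝ≥0∞ := fun a => ∫⁻ x in Set.Ici (d + δ), expR (l1 * x / t a) ∂(μ a) with hIr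
  have hsplit : ∀ a, Z1 a ≤ Il a + Im a + Ir a := by
    intro a
    have hsub : (Set.univ : Set ℝ) ⊆ Set.Iic (d - δ) ∪ (S ∪ Set.Ici (d + δ)) := by
      intro x _
      rcases le_or_gt x (d - δ) with h | h
      · exact Or.inl h
      rcases lt_or_ge x (d + δ) with h2 | h2
      · exact Or.inr (Or.inl ⟨h, h2⟩)
      · exact Or.inr (Or.inr h2)
    calc Z1 a = ∫⁻ x in Set.univ, expR (l1 * x / t a) ∂(μ a) := (setLIntegral_univ _).symm
      _ ≤ ∫⁻ x in Set.Iic (d - δ) ∪ (S ∪ Set.Ici (d + δ)), expR (l1 * x / t a) ∂(μ a) :=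
          lintegral_mono_set hsub
      _ ≤ Il a + (∫⁻ x in S ∪ Set.Ici (d + δ), expR (l1 * x / t a) ∂(μ a)) :=
          lintegral_union_le _ _ _
      _ ≤ Il a + (Im a + Ir a) := add_le_add_right (lintegral_union_le _ _ _) _
      _ = Il a + Im a + Ir a := (add_assoc _ _ _).symm
  -- tail limsup bounds
  have hIlls : limsup (fun a => Il a ^ (t a)) atTop ≤ expR (c1 - ρ) := by
    have h1 : ∀ᶠ a in atTop, Il a ^ (t a)
        ≤ expR ((l1 - la) * (d - δ)) * (∫⁻ x, expR (la * x / t a) ∂(μ a)) ^ (t a) := by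
      refine Eventually.of_forall fun a => ?_
      refine tail_bound μ t l1 la _ _ measurableSet_Iic (fun x hx => ?_) a (hpos a)
      have hx' : x ≤ d - δ := hx
      nlinarith [mul_nonneg (by linarith : (0:ℝ) ≤ l1 - la) (by linarith : (0:ℝ) ≤ (d - δ) - x)]
    calc limsup (fun a => Il a ^ (t a)) atTop
        ≤ limsup (fun a => expR ((l1 - la) * (d - δ))
            * (∫⁻ x, expR (la * x / t a) ∂(μ a)) ^ (t a)) atTop := limsup_le_limsup h1
      _ = expR ((l1 - la) * (d - δ))
            * limsup (fun a => (∫⁻ x, expR (la * x / t a) ∂(μ a)) ^ (t a)) atTop :=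
          ENNReal.limsup_const_mul_of_ne_top (expR_ne_top _)
      _ = expR ((l1 - la) * (d - δ)) * expR cla := by rw [hTa.limsup_eq]
      _ = expR ((l1 - la) * (d - δ) + cla) := expR_mul _ _
      _ ≤ expR (c1 - ρ) := expR_le gl
  have hIrls : limsup (fun a => Ir a ^ (t a)) atTop ≤ expR (c1 - ρ) := by
    have h1 : ∀ᶠ a in atTop, Ir a ^ (t a)
        ≤ expR ((l1 - lb) * (d + δ)) * (∫⁻ x, expR (lb * x / t a) ∂(μ a)) ^ (t a) := by
      refine Eventually.of_forall fun a => ?_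
      refine tail_bound μ t l1 lb _ _ measurableSet_Ici (fun x hx => ?_) a (hpos a)
      have hx' : d + δ ≤ x := hx
      nlinarith [mul_nonneg (by linarith : (0:ℝ) ≤ lb - l1) (by linarith : (0:ℝ) ≤ x - (d + δ))]
    calc limsup (fun a => Ir a ^ (t a)) atTop
        ≤ limsup (fun a => expR ((l1 - lb) * (d + δ))
            * (∫⁻ x, expR (lb * x / t a) ∂(μ a)) ^ (t a)) atTop := limsup_le_limsup h1
      _ = expR ((l1 - lb) * (d + δ))
            * limsup (fun a => (∫⁻ x, expR (lb * x / t a) ∂(μ a)) ^ (t a)) atTop :=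
          ENNReal.limsup_const_mul_of_ne_top (expR_ne_top _)
      _ = expR ((l1 - lb) * (d + δ)) * expR clb := by rw [hTb.limsup_eq]
      _ = expR ((l1 - lb) * (d + δ) + clb) := expR_mul _ _
      _ ≤ expR (c1 - ρ) := expR_le gr
  -- eventual bounds
  have hE1 : ∀ᶠ a in atTop, expR (c1 - e / 2) < Z1 a ^ (t a) :=
    hT1.eventually (eventually_gt_nhds (expR_lt (by linarith)))
  have hE2 : ∀ᶠ a in atTop, Il a ^ (t a) < expR (c1 - 3 * ρ / 4) :=
    eventually_lt_of_limsup_lt (lt_of_le_of_lt hIlls (expR_lt (by linarith)))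
  have hE3 : ∀ᶠ a in atTop, Ir a ^ (t a) < expR (c1 - 3 * ρ / 4) :=
    eventually_lt_of_limsup_lt (lt_of_le_of_lt hIrls (expR_lt (by linarith)))
  have ht0' : Tendsto t atTop (𝓝[>] (0 : ℝ)) :=
    tendsto_nhdsWithin_of_tendsto_nhds_of_eventually_within _ hto0
      (Eventually.of_forall hpos)
  have hexp0 : ∀ c : ℝ, c < 0 → Tendsto (fun a => Real.exp (c / t a)) atTop (𝓝 0) := by
    intro c hc
    have h1 : Tendsto (fun a => (t a)⁻¹) atTop atTop := tendsto_inv_nhdsGT_zero.comp ht0'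
    have h2 : Tendsto (fun a => c * (t a)⁻¹) atTop atBot :=
      (tendsto_const_mul_atBot_of_neg hc).2 h1
    have h3 := Real.tendsto_exp_atBot.comp h2
    have h4 : (fun a => Real.exp (c / t a)) = Real.exp ∘ fun a => c * (t a)⁻¹ := by
      funext a; simp [Function.comp, div_eq_mul_inv]
    rw [h4]; exact h3
  have hE4 : ∀ᶠ a in atTop,
      Real.exp (-(e / 2) / t a) + 2 * Real.exp ((e / 2 - 3 * ρ / 4) / t a) ≤ 1 := by
    have h1 := (hexp0 (-(e / 2)) (by linarith)).add
      ((hexp0 (e / 2 - 3 * ρ / 4) (by linarith)).const_mul 2)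
    have h2 : (0 : ℝ) + 2 * 0 = 0 := by norm_num
    rw [h2] at h1
    exact h1.eventually (eventually_le_nhds (by norm_num))
  have hmain : ∀ᶠ a in atTop, expR (c1 - m - e) ≤ μ a S ^ (t a) := by
    filter_upwards [hE1, hE2, hE3, hE4] with a h1 h2 h3 h4
    have hta := hpos a
    set T := t a with hT
    -- un-powered bounds
    have hZ : expR ((c1 - e / 2) / T) ≤ Z1 a := by
      have h5 : (expR (c1 - e / 2)) ^ T⁻¹ ≤ (Z1 a ^ T) ^ T⁻¹ :=
        ENNReal.rpow_le_rpow h1.le (by positivity)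
      rw [← ENNReal.rpow_mul, mul_inv_cancel₀ hta.ne', ENNReal.rpow_one, expR_rpow] at h5
      rwa [div_eq_mul_inv]
    have hIlb : Il a ≤ expR ((c1 - 3 * ρ / 4) / T) := by
      have h5 : (Il a ^ T) ^ T⁻¹ ≤ (expR (c1 - 3 * ρ / 4)) ^ T⁻¹ :=
        ENNReal.rpow_le_rpow h2.le (by positivity)
      rw [← ENNReal.rpow_mul, mul_inv_cancel₀ hta.ne', ENNReal.rpow_one, expR_rpow] at h5
      rwa [← div_eq_mul_inv] at h5
    have hIrb : Ir a ≤ expR ((c1 - 3 * ρ / 4) / T) := by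
      have h5 : (Ir a ^ T) ^ T⁻¹ ≤ (expR (c1 - 3 * ρ / 4)) ^ T⁻¹ :=
        ENNReal.rpow_le_rpow h3.le (by positivity)
      rw [← ENNReal.rpow_mul, mul_inv_cancel₀ hta.ne', ENNReal.rpow_one, expR_rpow] at h5
      rwa [← div_eq_mul_inv] at h5
    have hkey : expR ((c1 - e) / T) + (expR ((c1 - 3 * ρ / 4) / T) + expR ((c1 - 3 * ρ / 4) / T))
        ≤ expR ((c1 - e / 2) / T) := by
      rw [expR, expR, expR, ← ENNReal.ofReal_add (Real.exp_pos _).le (Real.exp_pos _).le,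
        ← ENNReal.ofReal_add (Real.exp_pos _).le (by positivity)]
      refine ENNReal.ofReal_le_ofReal ?_
      have e1 : Real.exp ((c1 - e) / T) = Real.exp ((c1 - e / 2) / T) * Real.exp (-(e / 2) / T) := by
        rw [← Real.exp_add]
        congr 1
        field_simp
        ring
      have e2 : Real.exp ((c1 - 3 * ρ / 4) / T)
          = Real.exp ((c1 - e / 2) / T) * Real.exp ((e / 2 - 3 * ρ / 4) / T) := by
        rw [← Real.exp_add]
        congr 1
        field_simp
        ring
      rw [e1, e2]
      nlinarith [Real.exp_pos ((c1 - e / 2) / T), Real.exp_pos (-(e / 2) / T),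
        Real.exp_pos ((e / 2 - 3 * ρ / 4) / T)]
    have hfin : Il a + Ir a ≠ ∞ := by
      refine (lt_of_le_of_lt (add_le_add hIlb hIrb) ?_).ne
      exact ENNReal.add_lt_top.2 ⟨expR_lt_top _, expR_lt_top _⟩
    have hIm : expR ((c1 - e) / T) ≤ Im a := by
      have h6 : expR ((c1 - e) / T) + (Il a + Ir a) ≤ Im a + (Il a + Ir a) := by
        calc expR ((c1 - e) / T) + (Il a + Ir a)
            ≤ expR ((c1 - e) / T)
              + (expR ((c1 - 3 * ρ / 4) / T) + expR ((c1 - 3 * ρ / 4) / T)) :=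
              add_le_add_right (add_le_add hIlb hIrb) _
          _ ≤ expR ((c1 - e / 2) / T) := hkey
          _ ≤ Z1 a := hZ
          _ ≤ Il a + Im a + Ir a := hsplit a
          _ = Im a + (Il a + Ir a) := by ring
      exact (ENNReal.add_le_add_iff_right hfin).1 h6
    have hImS : Im a ≤ expR (m / T) * μ a S := by
      calc Im a ≤ ∫⁻ _x in S, expR (m / T) ∂(μ a) :=
            setLIntegral_mono' measurableSet_Ioo
              (fun x hx => expR_le ((div_le_div_iff_of_pos_right hta).2 (hm x hx)))
        _ = expR (m / T) * μ a S := setLIntegral_const _ _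
    have h8 : expR (c1 - e) ≤ expR m * μ a S ^ T := by
      have h7 := ENNReal.rpow_le_rpow (hIm.trans hImS) hta.le
      rwa [ENNReal.mul_rpow_of_nonneg _ _ hta.le, expR_rpow, expR_rpow,
        div_mul_cancel₀ _ hta.ne', div_mul_cancel₀ _ hta.ne'] at h7
    calc expR (c1 - m - e) = expR (-m) * expR (c1 - e) := by
          rw [expR_mul]; congr 1; ring
      _ ≤ expR (-m) * (expR m * μ a S ^ T) := mul_le_mul_right h8 _
      _ = (expR (-m) * expR m) * μ a S ^ T := (mul_assoc _ _ _).symm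
      _ = μ a S ^ T := by rw [expR_mul, neg_add_cancel, expR_zero, one_mul]
  exact le_liminf_of_le (by isBoundedDefault) hmain

end MID

/-- The slope-data hypothesis extracted from a one-sided derivative. -/
def SlopeHyp (G : Set ℝ) (L : ℝ → ℝ) (l₀ d : ℝ) : Prop :=
  ∀ δ κ : ℝ, 0 < δ → 0 < κ → δ * (3 * (|l₀| + 1)) ≤ κ →
    ∃ la l1 lb ρ : ℝ, 0 < ρ ∧ la ∈ G ∧ l1 ∈ G ∧ lb ∈ G ∧ la ≤ l1 ∧ l1 ≤ lb ∧
      ((l1 - la) * (d - δ) + L la ≤ L l1 - ρ) ∧ ((l1 - lb) * (d + δ) + L lb ≤ L l1 - ρ) ∧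
      (L l₀ - l₀ * d - κ ≤ L l1 - (l1 * d + |l1| * δ) - κ / 3)

lemma core_bound {A : Type*} [Preorder A] [Nonempty A] [IsDirected A (· ≤ ·)]
    (μ : A → Measure ℝ) (t : A → ℝ) (hpos : ∀ a, 0 < t a)
    (hto0 : Tendsto t atTop (𝓝 (0 : ℝ)))
    (G : Set ℝ) (L : ℝ → ℝ)
    (hT : ∀ l ∈ G, Tendsto (fun a => (∫⁻ x, expR (l * x / t a) ∂(μ a)) ^ (t a)) atTop
      (𝓝 (expR (L l))))
    (l₀ d : ℝ) (hyp : SlopeHyp G L l₀ d)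
    (U : Set ℝ) (hU : IsOpen U) (hdU : d ∈ U) :
    expR (L l₀ - l₀ * d) ≤ liminf (fun a => μ a U ^ (t a)) atTop := by
  set c0 := L l₀ - l₀ * d with hc0
  refine le_of_forall_lt fun r hr => ?_
  -- find κ > 0 with r < expR (c0 - κ)
  obtain ⟨κ, hκ0, hrκ⟩ : ∃ κ : ℝ, 0 < κ ∧ r < expR (c0 - κ) := by
    have hrt : r ≠ ∞ := hr.ne_top
    have hr' : r.toReal < Real.exp c0 := (ENNReal.lt_ofReal_iff_toReal_lt hrt).1 hr
    set y := (r.toReal + Real.exp c0) / 2 with hy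
    have hy1 : r.toReal < y := by simp only [hy]; linarith
    have hy2 : y < Real.exp c0 := by simp only [hy]; linarith
    have hy0 : 0 < y := by
      have := ENNReal.toReal_nonneg (a := r)
      simp only [hy]; positivity
    refine ⟨c0 - Real.log y, by rw [sub_pos]; exact (Real.log_lt_iff_lt_exp hy0).2 hy2, ?_⟩
    have hval : expR (c0 - (c0 - Real.log y)) = ENNReal.ofReal y := by
      simp [expR, Real.exp_log hy0]
    rw [hval]
    exact (ENNReal.lt_ofReal_iff_toReal_lt hrt).2 hy1
  -- choose δ
  obtain ⟨rU, hrU, hball⟩ := Metric.isOpen_iff.1 hU d hdU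
  set δ := min (rU / 2) (κ / (3 * (|l₀| + 1))) with hδdef
  have habs0 : (0:ℝ) < 3 * (|l₀| + 1) := by positivity
  have hδ0 : 0 < δ := lt_min (by linarith) (by positivity)
  have hδκ : δ * (3 * (|l₀| + 1)) ≤ κ := by
    have h1 : δ ≤ κ / (3 * (|l₀| + 1)) := min_le_right _ _
    rw [le_div_iff₀ habs0] at h1
    exact h1
  have hSU : Set.Ioo (d - δ) (d + δ) ⊆ U := by
    intro x hx
    apply hball
    rw [Metric.mem_ball, Real.dist_eq]
    have h1 : δ ≤ rU / 2 := min_le_left _ _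
    rcases hx with ⟨hx1, hx2⟩
    rw [abs_lt]
    constructor <;> linarith
  obtain ⟨la, l1, lb, ρ, hρ, hlaG, hl1G, hlbG, hab1, h1b, gl, gr, hfinal⟩ :=
    hyp δ κ hδ0 hκ0 hδκ
  have hm : ∀ x ∈ Set.Ioo (d - δ) (d + δ), l1 * x ≤ l1 * d + |l1| * δ := by
    intro x hx
    rcases hx with ⟨hx1, hx2⟩
    rcases le_or_gt 0 l1 with h | h
    · rw [abs_of_nonneg h]; nlinarith
    · rw [abs_of_neg h]; nlinarith
  have hmid := mid_bound μ t hpos hto0 la l1 lb (L la) (L l1) (L lb)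
    (hT la hlaG) (hT l1 hl1G) (hT lb hlbG) d δ ρ (l1 * d + |l1| * δ) hδ0 hρ hab1 h1b gl gr hm
    (κ / 3) (by linarith)
  have hsub : liminf (fun a => μ a (Set.Ioo (d - δ) (d + δ)) ^ (t a)) atTop
      ≤ liminf (fun a => μ a U ^ (t a)) atTop := by
    refine liminf_le_liminf (Eventually.of_forall fun a => ?_)
    exact ENNReal.rpow_le_rpow (measure_mono hSU) (hpos a).le
  calc r < expR (c0 - κ) := hrκ
    _ ≤ expR (L l1 - (l1 * d + |l1| * δ) - κ / 3) := expR_le (by rw [hc0] at *; linarith)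
    _ ≤ liminf (fun a => μ a (Set.Ioo (d - δ) (d + δ)) ^ (t a)) atTop := hmid
    _ ≤ liminf (fun a => μ a U ^ (t a)) atTop := hsub

lemma slopeHyp_right (G : Set ℝ) (hG : IsOpen G) (L : ℝ → ℝ) (l₀ d : ℝ) (hl₀ : l₀ ∈ G)
    (hd : HasDerivWithinAt L d (Set.Ioi l₀) l₀) : SlopeHyp G L l₀ d := by
  intro δ κ hδ hκ hδκ
  set η := min 1 (δ / 8) with hη
  have hη0 : 0 < η := lt_min one_pos (by linarith)
  have hη1 : η ≤ 1 := min_le_left _ _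
  have hηδ : η ≤ δ / 8 := min_le_right _ _
  have hslope := hasDerivWithinAt_iff_tendsto_slope.1 hd
  rw [Metric.tendsto_nhdsWithin_nhds] at hslope
  obtain ⟨ε₁, hε₁, hsl⟩ := hslope η hη0
  obtain ⟨rG, hrG, hball⟩ := Metric.isOpen_iff.1 hG l₀ hl₀
  have key : ∀ z : ℝ, l₀ < z → z - l₀ < ε₁ → |L z - L l₀ - (z - l₀) * d| ≤ η * (z - l₀) := by
    intro z hz1 hz2
    have hzpos : (0:ℝ) < z - l₀ := by linarith
    have hmem : z ∈ Set.Ioi l₀ \ {l₀} := ⟨hz1, by simp only [mem_singleton_iff]; intro h; simp [h] at hz1⟩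
    have hdist : dist z l₀ < ε₁ := by
      rw [Real.dist_eq, abs_of_pos hzpos]; exact hz2
    have h := hsl hmem hdist
    rw [Real.dist_eq, slope_def_field] at h
    have hne : z - l₀ ≠ 0 := ne_of_gt hzpos
    have heq : L z - L l₀ - (z - l₀) * d = ((L z - L l₀) / (z - l₀) - d) * (z - l₀) := by
      field_simp
    calc |L z - L l₀ - (z - l₀) * d| = |(L z - L l₀) / (z - l₀) - d| * |z - l₀| := by
          rw [heq, abs_mul]
      _ = |(L z - L l₀) / (z - l₀) - d| * (z - l₀) := by rw [abs_of_pos hzpos]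
      _ ≤ η * (z - l₀) := mul_le_mul_of_nonneg_right h.le hzpos.le
  set ε := min ε₁ (min rG (min 1 (2 * κ / 3))) / 2 with hε
  have hε0 : 0 < ε := by
    have := lt_min hε₁ (lt_min hrG (lt_min one_pos (by linarith : (0:ℝ) < 2 * κ / 3)))
    positivity
  have hεε₁ : ε < ε₁ := by
    have h1 : min ε₁ (min rG (min 1 (2 * κ / 3))) ≤ ε₁ := min_le_left _ _
    simp only [hε]; linarith
  have hεrG : ε < rG := by
    have h1 : min ε₁ (min rG (min 1 (2 * κ / 3))) ≤ rG := (min_le_right _ _).trans (min_le_left _ _)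
    simp only [hε]; linarith
  have hε1 : ε ≤ 1 := by
    have h1 : min ε₁ (min rG (min 1 (2 * κ / 3))) ≤ 1 :=
      (min_le_right _ _).trans ((min_le_right _ _).trans (min_le_left _ _))
    simp only [hε]; linarith
  have hεκ : ε ≤ 2 * κ / 3 := by
    have h1 : min ε₁ (min rG (min 1 (2 * κ / 3))) ≤ 2 * κ / 3 :=
      (min_le_right _ _).trans ((min_le_right _ _).trans (min_le_right _ _))
    simp only [hε]; linarith
  set l1 := l₀ + ε / 2 with hl1
  set lb := l₀ + ε with hlb
  have hl1G : l1 ∈ G := by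
    apply hball
    rw [Metric.mem_ball, Real.dist_eq, show l1 - l₀ = ε / 2 by rw [hl1]; ring,
      abs_of_pos (by linarith)]
    linarith
  have hlbG : lb ∈ G := by
    apply hball
    rw [Metric.mem_ball, Real.dist_eq, show lb - l₀ = ε by rw [hlb]; ring,
      abs_of_pos hε0]
    linarith
  have hb1 := key l1 (by rw [hl1]; linarith) (by rw [hl1]; linarith)
  have hb2 := key lb (by rw [hlb]; linarith) (by rw [hlb]; linarith)
  rw [show l1 - l₀ = ε / 2 by rw [hl1]; ring] at hb1
  rw [show lb - l₀ = ε by rw [hlb]; ring] at hb2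
  obtain ⟨hb1l, hb1r⟩ := abs_le.1 hb1
  obtain ⟨hb2l, hb2r⟩ := abs_le.1 hb2
  have hηε : η * ε ≤ δ / 8 * ε := mul_le_mul_of_nonneg_right hηδ hε0.le
  have habs : |l1| ≤ |l₀| + 1 := by
    calc |l1| ≤ |l₀| + |ε / 2| := abs_add_le _ _
      _ ≤ |l₀| + 1 := by rw [abs_of_pos (by linarith : (0:ℝ) < ε / 2)]; linarith
  have habsδ : |l1| * δ ≤ (|l₀| + 1) * δ := mul_le_mul_of_nonneg_right habs hδ.le
  refine ⟨l₀, l1, lb, ε * δ / 4, by positivity, hl₀, hl1G, hlbG, by rw [hl1]; linarith,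
    by rw [hl1, hlb]; linarith, ?_, ?_, ?_⟩
  · rw [show l1 - l₀ = ε / 2 by rw [hl1]; ring]
    nlinarith
  · rw [show l1 - lb = -(ε / 2) by rw [hl1, hlb]; ring]
    nlinarith
  · rw [show l1 * d = l₀ * d + ε / 2 * d by rw [hl1]; ring]
    nlinarith [mul_le_mul_of_nonneg_right hη1 hε0.le]

lemma slopeHyp_left (G : Set ℝ) (hG : IsOpen G) (L : ℝ → ℝ) (l₀ d : ℝ) (hl₀ : l₀ ∈ G)
    (hd : HasDerivWithinAt L d (Set.Iio l₀) l₀) : SlopeHyp G L l₀ d := by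
  intro δ κ hδ hκ hδκ
  set η := min 1 (δ / 8) with hη
  have hη0 : 0 < η := lt_min one_pos (by linarith)
  have hη1 : η ≤ 1 := min_le_left _ _
  have hηδ : η ≤ δ / 8 := min_le_right _ _
  have hslope := hasDerivWithinAt_iff_tendsto_slope.1 hd
  rw [Metric.tendsto_nhdsWithin_nhds] at hslope
  obtain ⟨ε₁, hε₁, hsl⟩ := hslope η hη0
  obtain ⟨rG, hrG, hball⟩ := Metric.isOpen_iff.1 hG l₀ hl₀
  have key : ∀ z : ℝ, z < l₀ → l₀ - z < ε₁ → |L z - L l₀ - (z - l₀) * d| ≤ η * (l₀ - z) := by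
    intro z hz1 hz2
    have hzpos : (0:ℝ) < l₀ - z := by linarith
    have hmem : z ∈ Set.Iio l₀ \ {l₀} := ⟨hz1, by simp only [mem_singleton_iff]; intro h; simp [h] at hz1⟩
    have hdist : dist z l₀ < ε₁ := by
      rw [Real.dist_eq, abs_of_neg (by linarith : z - l₀ < 0)]; linarith
    have h := hsl hmem hdist
    rw [Real.dist_eq, slope_def_field] at h
    have hne : z - l₀ ≠ 0 := by intro h0; rw [sub_eq_zero] at h0; simp [h0] at hz1
    have heq : L z - L l₀ - (z - l₀) * d = ((L z - L l₀) / (z - l₀) - d) * (z - l₀) := by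
      field_simp
    calc |L z - L l₀ - (z - l₀) * d| = |(L z - L l₀) / (z - l₀) - d| * |z - l₀| := by
          rw [heq, abs_mul]
      _ = |(L z - L l₀) / (z - l₀) - d| * (l₀ - z) := by
          rw [abs_of_neg (by linarith : z - l₀ < 0), neg_sub]
      _ ≤ η * (l₀ - z) := mul_le_mul_of_nonneg_right h.le hzpos.le
  set ε := min ε₁ (min rG (min 1 (2 * κ / 3))) / 2 with hε
  have hε0 : 0 < ε := by
    have := lt_min hε₁ (lt_min hrG (lt_min one_pos (by linarith : (0:ℝ) < 2 * κ / 3)))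
    positivity
  have hεε₁ : ε < ε₁ := by
    have h1 : min ε₁ (min rG (min 1 (2 * κ / 3))) ≤ ε₁ := min_le_left _ _
    simp only [hε]; linarith
  have hεrG : ε < rG := by
    have h1 : min ε₁ (min rG (min 1 (2 * κ / 3))) ≤ rG := (min_le_right _ _).trans (min_le_left _ _)
    simp only [hε]; linarith
  have hε1 : ε ≤ 1 := by
    have h1 : min ε₁ (min rG (min 1 (2 * κ / 3))) ≤ 1 :=
      (min_le_right _ _).trans ((min_le_right _ _).trans (min_le_left _ _))
    simp only [hε]; linarith
  have hεκ : ε ≤ 2 * κ / 3 := by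
    have h1 : min ε₁ (min rG (min 1 (2 * κ / 3))) ≤ 2 * κ / 3 :=
      (min_le_right _ _).trans ((min_le_right _ _).trans (min_le_right _ _))
    simp only [hε]; linarith
  set la := l₀ - ε with hla
  set l1 := l₀ - ε / 2 with hl1
  have hl1G : l1 ∈ G := by
    apply hball
    rw [Metric.mem_ball, Real.dist_eq, show l1 - l₀ = -(ε / 2) by rw [hl1]; ring,
      abs_of_neg (by linarith : -(ε / 2) < 0)]
    linarith
  have hlaG : la ∈ G := by
    apply hball
    rw [Metric.mem_ball, Real.dist_eq, show la - l₀ = -ε by rw [hla]; ring,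
      abs_of_neg (by linarith : -ε < 0)]
    linarith
  have hb1 := key l1 (by rw [hl1]; linarith) (by rw [hl1]; linarith)
  have hb2 := key la (by rw [hla]; linarith) (by rw [hla]; linarith)
  rw [show l1 - l₀ = -(ε / 2) by rw [hl1]; ring, show l₀ - l1 = ε / 2 by rw [hl1]; ring] at hb1
  rw [show la - l₀ = -ε by rw [hla]; ring, show l₀ - la = ε by rw [hla]; ring] at hb2
  obtain ⟨hb1l, hb1r⟩ := abs_le.1 hb1
  obtain ⟨hb2l, hb2r⟩ := abs_le.1 hb2
  have hηε : η * ε ≤ δ / 8 * ε := mul_le_mul_of_nonneg_right hηδ hε0.le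
  have habs : |l1| ≤ |l₀| + 1 := by
    calc |l1| = |l₀ + (-(ε / 2))| := by rw [hl1]; ring_nf
      _ ≤ |l₀| + |(-(ε / 2))| := abs_add_le _ _
      _ ≤ |l₀| + 1 := by rw [abs_neg, abs_of_pos (by linarith : (0:ℝ) < ε / 2)]; linarith
  have habsδ : |l1| * δ ≤ (|l₀| + 1) * δ := mul_le_mul_of_nonneg_right habs hδ.le
  refine ⟨la, l1, l₀, ε * δ / 4, by positivity, hlaG, hl1G, hl₀, by rw [hla, hl1]; linarith,
    by rw [hl1]; linarith, ?_, ?_, ?_⟩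
  · rw [show l1 - la = ε / 2 by rw [hl1, hla]; ring]
    nlinarith
  · rw [show l1 - l₀ = -(ε / 2) by rw [hl1]; ring]
    nlinarith
  · rw [show l1 * d = l₀ * d - ε / 2 * d by rw [hl1]; ring]
    nlinarith [mul_le_mul_of_nonneg_right hη1 hε0.le]


end AuxLDP

/-- Proposition `lem-x+`: existence of a subnet along which `l₁` is dominated by
`λ₀ x − L(λ₀)` at the one-sided derivatives of `L|_G`, hence by `L|_G^*` on their ranges. -/
theorem statement4
    {A : Type u} [Preorder A] [IsDirected A (· ≤ ·)] [Nonempty A]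
    (μ : A → Measure ℝ) (t : A → ℝ)
    (hRadon : ∀ a, (μ a).InnerRegular) (hSub : ∀ a, μ a Set.univ ≤ 1)
    (hpos : ∀ a, 0 < t a) (hto0 : Tendsto t atTop (𝓝 (0 : ℝ)))
    (G : Set ℝ) (hGopen : IsOpen G) (hGint : G.OrdConnected) (hGne : G.Nonempty)
    (L : ℝ → ℝ)
    (hL : ∀ l ∈ G, LambdaExists μ t (hlin l) ∧ LambdaBar μ t (hlin l) = ((L l : ℝ) : EReal)) :
    ∃ (B : Type u) (r : B → B → Prop) (φ : B → A),
      Nonempty B ∧ Reflexive r ∧ Transitive r ∧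
      (∀ b₁ b₂ : B, ∃ b₃ : B, r b₁ b₃ ∧ r b₂ b₃) ∧
      (∀ b₁ b₂ : B, r b₁ b₂ → φ b₁ ≤ φ b₂) ∧
      (∀ a : A, ∃ b : B, a ≤ φ b) ∧
      (∀ l₀ ∈ G, ∀ d : ℝ,
        (HasDerivWithinAt L d (Set.Iio l₀) l₀ →
          lOneF (μ ∘ φ) (t ∘ φ) (netFilter r) d ≤ ((l₀ * d - L l₀ : ℝ) : EReal)) ∧
        (HasDerivWithinAt L d (Set.Ioi l₀) l₀ →
          lOneF (μ ∘ φ) (t ∘ φ) (netFilter r) d ≤ ((l₀ * d - L l₀ : ℝ) : EReal))) ∧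
      (∀ d ∈ ranLR L G, lOneF (μ ∘ φ) (t ∘ φ) (netFilter r) d ≤ LegG L G d) := by
  haveI : (atTop : Filter A).NeBot := atTop_neBot_iff.mpr ⟨inferInstance, inferInstance⟩
  -- convergence of the power-integrals on G
  have hT : ∀ l ∈ G, Tendsto (fun a => (∫⁻ x, expR (l * x / t a) ∂(μ a)) ^ (t a)) atTop
      (𝓝 (expR (L l))) := by
    intro l hl
    obtain ⟨hex, hbar⟩ := hL l hl
    have hfun : expPow μ t (hlin l) = fun a => (∫⁻ x, expR (l * x / t a) ∂(μ a)) ^ (t a) := by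
      funext a
      unfold expPow hlin
      congr 1
      refine lintegral_congr fun x => ?_
      rw [← EReal.coe_mul, EReal.exp_coe]
      unfold expR
      rw [div_eq_inv_mul]
    have hlimsup : limsup (expPow μ t (hlin l)) atTop = expR (L l) := by
      have h2 := congrArg EReal.exp hbar
      rwa [LambdaBar, ENNReal.exp_log, EReal.exp_coe] at h2
    have hliminf : liminf (expPow μ t (hlin l)) atTop = expR (L l) := by
      have h2 := congrArg EReal.exp hex
      rw [LambdaUnder, LambdaBar, ENNReal.exp_log, ENNReal.exp_log] at h2
      rw [h2]; exact hlimsup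
    rw [← hfun]
    exact tendsto_of_liminf_eq_limsup hliminf hlimsup
  -- the l₁ bound along the original net, from the slope hypothesis
  have hlone : ∀ l₀ ∈ G, ∀ d : ℝ, SlopeHyp G L l₀ d →
      lOneF μ t (atTop : Filter A) d ≤ ((l₀ * d - L l₀ : ℝ) : EReal) := by
    intro l₀ hl₀ d hyp
    have hinf : expR (L l₀ - l₀ * d) ≤ ⨅ (U : Set ℝ) (_ : IsOpen U) (_ : d ∈ U),
        liminf (fun a => μ a U ^ (t a)) atTop :=
      le_iInf fun U => le_iInf fun hU => le_iInf fun hdU =>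
        core_bound μ t hpos hto0 G L hT l₀ d hyp U hU hdU
    have hlog : ((L l₀ - l₀ * d : ℝ) : EReal) ≤ ENNReal.log
        (⨅ (U : Set ℝ) (_ : IsOpen U) (_ : d ∈ U),
          liminf (fun a => μ a U ^ (t a)) atTop) := by
      rw [← log_expR (L l₀ - l₀ * d)]
      exact ENNReal.log_monotone hinf
    unfold lOneF
    rw [EReal.neg_le, ← EReal.coe_neg, show -(l₀ * d - L l₀) = L l₀ - l₀ * d by ring]
    exact hlog
  refine ⟨A, (· ≤ ·), id, inferInstance, fun b => le_refl b,
    fun _ _ _ h1 h2 => h1.trans h2, fun b₁ b₂ => exists_ge_ge b₁ b₂,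
    fun _ _ h => h, fun a => ⟨a, le_rfl⟩, ?_, ?_⟩
  · intro l₀ hl₀ d
    constructor
    · intro hd
      exact hlone l₀ hl₀ d (slopeHyp_left G hGopen L l₀ d hl₀ hd)
    · intro hd
      exact hlone l₀ hl₀ d (slopeHyp_right G hGopen L l₀ d hl₀ hd)
  · intro d hd
    obtain ⟨l, hlG, hcase⟩ := hd
    have h1 : lOneF (μ ∘ id) (t ∘ id) (netFilter (· ≤ · : A → A → Prop)) d
        ≤ ((l * d - L l : ℝ) : EReal) := by
      rcases hcase with h | h
      · exact hlone l hlG d (slopeHyp_left G hGopen L l d hlG h)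
      · exact hlone l hlG d (slopeHyp_right G hGopen L l d hlG h)
    refine h1.trans ?_
    exact le_iSup₂ (f := fun (l : ℝ) (_ : l ∈ G) => ((l * d - L l : ℝ) : EReal)) l hlG

end
end
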